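/- arXiv:2506.10623 — 7 statements merged into one kernel-verified Lean document; each statement's English description precedes it below -/
import Mathlib

section
/- There exist C, c > 0 depending only on α such that |φ₀'(x)| ≤ C·exp(−c·|x|^{(2+α)/2}) for all x ∈ ℝ. -/
open MeasureTheory

/-- `φ` is an eigenfunction of the Sturm–Liouville operator `𝓛 = -d²/dx² + |x|^α`
for the eigenvalue `lam`. -/
def IsEigenfunction (α lam : ℝ) (φ : ℝ → ℝ) : Prop :=
  ContDiff ℝ 2 φ ∧ φ ≠ 0 ∧ Integrable (fun x : ℝ => (φ x) ^ 2) ∧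
    ∀ x : ℝ, -(deriv (deriv φ) x) + |x| ^ α * φ x = lam * φ x

/-- An integrable function cannot be bounded below by a positive constant on a right ray. -/
lemma not_integrable_tail {f : ℝ → ℝ} (hf : Integrable f) {a ε : ℝ} (hε : 0 < ε)
    (h : ∀ x, a ≤ x → ε ≤ f x) : False := by
  have h1 := hf.measure_ge_lt_top hε
  have h2 : (volume (Set.Ici a)) ≤ volume {x | ε ≤ f x} :=
    measure_mono fun x hx => h x hx
  rw [Real.volume_Ici] at h2
  exact absurd (lt_of_le_of_lt h2 h1) (by simp)

set_option maxHeartbeats 1000000 in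
/-- One-sided tail estimate for the derivative of a positive square-integrable solution. -/
lemma one_sided_tail (α lam : ℝ) (hα : 0 < α) (hlam : 0 < lam) (φ : ℝ → ℝ)
    (hC2 : ContDiff ℝ 2 φ)
    (hInt : Integrable (fun x : ℝ => (φ x) ^ 2))
    (hODE : ∀ x : ℝ, -(deriv (deriv φ) x) + |x| ^ α * φ x = lam * φ x)
    (hpos : ∀ x : ℝ, 0 < φ x) :
    ∃ C c R : ℝ, 0 < C ∧ 0 < c ∧ 1 ≤ R ∧
      ∀ x, R ≤ x → |deriv φ x| ≤ C * Real.exp (-c * x ^ ((2 + α) / 2)) := by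
  set θ : ℝ := (2 + α) / 2 with hθdef
  have hθ1 : 1 < θ := by rw [hθdef]; linarith
  have hθpos : 0 < θ := lt_trans one_pos hθ1
  set cc : ℝ := 1 / (2 * θ) with hccdef
  have hccpos : 0 < cc := by positivity
  have hccθ : cc * θ = 1 / 2 := by
    rw [hccdef]; field_simp
  set R : ℝ := max (max 1 ((2 * lam) ^ α⁻¹)) (2 * θ) with hRdef
  have hR1 : 1 ≤ R := le_trans (le_max_left _ _) (le_max_left _ _)
  have hRθ : 2 * θ ≤ R := le_max_right _ _
  have hRpos : 0 < R := lt_of_lt_of_le one_pos hR1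
  have hq : ∀ x, R ≤ x → 2 * lam ≤ x ^ α := by
    intro x hx
    have h0 : (2 * lam) ^ α⁻¹ ≤ x :=
      le_trans (le_trans (le_max_right _ _) (le_max_left _ _)) hx
    calc 2 * lam = ((2 * lam) ^ α⁻¹) ^ α := (Real.rpow_inv_rpow (by positivity) hα.ne').symm
      _ ≤ x ^ α := Real.rpow_le_rpow (by positivity) h0 hα.le
  -- the "half" inequality via Bernoulli
  have hhalf : ∀ x : ℝ, 2 * θ ≤ x → x ^ θ / 2 ≤ (x - 1) ^ θ := by
    intro x hx
    have hx2 : (2 : ℝ) ≤ x := by linarith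
    have hx0 : (0 : ℝ) < x := by linarith
    have hinv : (1 : ℝ) / x ≤ 1 := by
      rw [div_le_one hx0]; linarith
    have hb : 1 + θ * (-(1 / x)) ≤ (1 + -(1 / x)) ^ θ :=
      one_add_mul_self_le_rpow_one_add (by linarith) hθ1.le
    have hhalfge : (1 / 2 : ℝ) ≤ 1 + θ * (-(1 / x)) := by
      have h1 : θ * (1 / x) ≤ 1 / 2 := by
        rw [mul_one_div, div_le_div_iff₀ hx0 (by norm_num : (0:ℝ) < 2)]
        linarith
      linarith
    have hsplit : x - 1 = x * (1 + -(1 / x)) := by field_simp; ring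
    calc x ^ θ / 2 = x ^ θ * (1 / 2) := by ring
      _ ≤ x ^ θ * ((1 + -(1 / x)) ^ θ) := by
          apply mul_le_mul_of_nonneg_left (le_trans hhalfge hb)
          exact Real.rpow_nonneg hx0.le θ
      _ = (x * (1 + -(1 / x))) ^ θ := (Real.mul_rpow hx0.le (by linarith)).symm
      _ = (x - 1) ^ θ := by rw [← hsplit]
  -- smoothness facts
  have hφdiff : Differentiable ℝ φ := hC2.differentiable (by norm_num)
  have h11 : ContDiff ℝ ((1 : ℕ) + 1) φ := by exact_mod_cast hC2
  have hD1 : ContDiff ℝ 1 (deriv φ) := by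
    have := (contDiff_succ_iff_deriv.mp h11).2.2
    exact_mod_cast this
  have hDdiff : Differentiable ℝ (deriv φ) := hD1.differentiable one_ne_zero
  have hDcont : Continuous (deriv φ) := hDdiff.continuous
  have hD2 : ∀ x, deriv (deriv φ) x = (|x| ^ α - lam) * φ x := by
    intro x
    have h := hODE x
    nlinarith [h]
  have hDA : ∀ x : ℝ, HasDerivAt φ (deriv φ x) x := fun x => (hφdiff x).hasDerivAt
  have hDA2 : ∀ x : ℝ, HasDerivAt (deriv φ) ((|x| ^ α - lam) * φ x) x := fun x =>
    hD2 x ▸ (hDdiff x).hasDerivAt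
  have habs : ∀ x : ℝ, R ≤ x → |x| = x := fun x hx =>
    abs_of_pos (lt_of_lt_of_le hRpos hx)
  -- monotonicity of deriv φ on [R, ∞)
  have hmonoD : MonotoneOn (deriv φ) (Set.Ici R) := by
    apply monotoneOn_of_deriv_nonneg (convex_Ici R) hDcont.continuousOn
      hDdiff.differentiableOn
    intro x hx
    rw [interior_Ici] at hx
    rw [hD2, habs x hx.le]
    have h2l := hq x hx.le
    have := hpos x
    nlinarith
  -- deriv φ is negative on [R, ∞)
  have hDneg : ∀ x, R ≤ x → deriv φ x < 0 := by
    intro x hx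
    by_contra hcon
    push_neg at hcon
    have hmφ : MonotoneOn φ (Set.Ici x) := by
      apply monotoneOn_of_deriv_nonneg (convex_Ici x) hφdiff.continuous.continuousOn
        hφdiff.differentiableOn
      intro y hy
      rw [interior_Ici] at hy
      exact le_trans hcon (hmonoD (Set.mem_Ici.mpr hx)
        (Set.mem_Ici.mpr (le_trans hx hy.le)) hy.le)
    refine not_integrable_tail hInt (pow_pos (hpos x) 2) (a := x) ?_
    intro y hy
    exact pow_le_pow_left₀ (hpos x).le
      (hmφ (Set.mem_Ici.mpr le_rfl) (Set.mem_Ici.mpr hy) hy) 2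
  -- comparison function w and its derivatives
  set w : ℝ → ℝ := fun x => Real.exp (-(cc * x ^ θ)) with hwdef
  have hwpos : ∀ x, 0 < w x := fun x => Real.exp_pos _
  set w1 : ℝ → ℝ := fun x => -(cc * θ * x ^ (θ - 1)) * w x with hw1def
  have hw1DA : ∀ x : ℝ, 0 < x → HasDerivAt w (w1 x) x := by
    intro x hx
    have h1 : HasDerivAt (fun y : ℝ => y ^ θ) (θ * x ^ (θ - 1)) x :=
      Real.hasDerivAt_rpow_const (Or.inl hx.ne')
    have h2 : HasDerivAt (fun y : ℝ => -(cc * y ^ θ)) (-(cc * (θ * x ^ (θ - 1)))) x :=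
      (h1.const_mul cc).neg
    have h3 := (Real.hasDerivAt_exp (-(cc * x ^ θ))).comp x h2
    have he : w1 x = Real.exp (-(cc * x ^ θ)) * -(cc * (θ * x ^ (θ - 1))) := by
      simp only [hw1def, hwdef]; ring
    rw [he]
    exact h3
  set w2 : ℝ → ℝ := fun x =>
    -(cc * θ * ((θ - 1) * x ^ (θ - 1 - 1))) * w x + -(cc * θ * x ^ (θ - 1)) * w1 x with hw2def
  have hw2DA : ∀ x : ℝ, 0 < x → HasDerivAt w1 (w2 x) x := by
    intro x hx
    have h1 : HasDerivAt (fun y : ℝ => -(cc * θ * y ^ (θ - 1)))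
        (-(cc * θ * ((θ - 1) * x ^ (θ - 1 - 1)))) x :=
      ((Real.hasDerivAt_rpow_const (Or.inl hx.ne')).const_mul (cc * θ)).neg
    have h2 := h1.mul (hw1DA x hx)
    have he : w2 x = -(cc * θ * ((θ - 1) * x ^ (θ - 1 - 1))) * w x
        + -(cc * θ * x ^ (θ - 1)) * w1 x := rfl
    rw [he]
    exact h2
  -- w is a supersolution: w'' ≤ (x^α - lam) w on [R, ∞)
  have hsuper : ∀ x, R ≤ x → w2 x ≤ (x ^ α - lam) * w x := by
    intro x hx
    have hx0 : 0 < x := lt_of_lt_of_le hRpos hx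
    have key1 : x ^ (θ - 1) * x ^ (θ - 1) = x ^ α := by
      rw [← Real.rpow_add hx0]
      congr 1
      rw [hθdef]; ring
    have e2 : -(cc * θ * x ^ (θ - 1)) * w1 x = (1 / 4) * x ^ α * w x := by
      simp only [hw1def]
      have : cc * θ * x ^ (θ - 1) * (cc * θ * x ^ (θ - 1))
          = (cc * θ) * (cc * θ) * (x ^ (θ - 1) * x ^ (θ - 1)) := by ring
      calc -(cc * θ * x ^ (θ - 1)) * (-(cc * θ * x ^ (θ - 1)) * w x)
          = (cc * θ) * (cc * θ) * (x ^ (θ - 1) * x ^ (θ - 1)) * w x := by ring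
        _ = (1 / 4) * x ^ α * w x := by rw [key1, hccθ]; ring
    have e1 : 0 ≤ cc * θ * ((θ - 1) * x ^ (θ - 1 - 1)) * w x := by
      have h1 : (0:ℝ) ≤ θ - 1 := by linarith
      have h2 : (0:ℝ) ≤ x ^ (θ - 1 - 1) := Real.rpow_nonneg hx0.le _
      positivity
    have h14 : (1 / 4 : ℝ) * x ^ α ≤ x ^ α - lam := by
      have := hq x hx
      have hnn : (0:ℝ) ≤ x ^ α := Real.rpow_nonneg hx0.le α
      linarith
    calc w2 x = -(cc * θ * ((θ - 1) * x ^ (θ - 1 - 1))) * w x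
          + -(cc * θ * x ^ (θ - 1)) * w1 x := rfl
      _ = -(cc * θ * ((θ - 1) * x ^ (θ - 1 - 1)) * w x) + (1 / 4) * x ^ α * w x := by
          rw [e2]; ring
      _ ≤ 0 + (x ^ α - lam) * w x := by
          apply add_le_add (by linarith)
          exact mul_le_mul_of_nonneg_right h14 (hwpos x).le
      _ = (x ^ α - lam) * w x := by ring
  -- the Wronskian g
  set g : ℝ → ℝ := fun x => deriv φ x * w x - φ x * w1 x with hgdef
  have hgDA : ∀ x : ℝ, 0 < x →
      HasDerivAt g ((|x| ^ α - lam) * φ x * w x - φ x * w2 x) x := by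
    intro x hx
    have h := ((hDA2 x).mul (hw1DA x hx)).sub ((hDA x).mul (hw2DA x hx))
    have he : (|x| ^ α - lam) * φ x * w x - φ x * w2 x
        = (|x| ^ α - lam) * φ x * w x + deriv φ x * w1 x - (deriv φ x * w1 x + φ x * w2 x) := by
      ring
    rw [he]
    exact h
  have hgmono : MonotoneOn g (Set.Ici R) := by
    apply monotoneOn_of_deriv_nonneg (convex_Ici R)
    · exact fun x hx => (hgDA x (lt_of_lt_of_le hRpos hx)).continuousAt.continuousWithinAt
    · intro x hx
      rw [interior_Ici] at hx
      exact (hgDA x (lt_of_lt_of_le hRpos hx.le)).differentiableAt.differentiableWithinAt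
    · intro x hx
      rw [interior_Ici] at hx
      rw [(hgDA x (lt_of_lt_of_le hRpos hx.le)).deriv, habs x hx.le]
      have h1 : φ x * w2 x ≤ φ x * ((x ^ α - lam) * w x) :=
        mul_le_mul_of_nonneg_left (hsuper x hx.le) (hpos x).le
      nlinarith [h1]
  -- the quotient u = φ / w
  set u : ℝ → ℝ := fun t => φ t / w t with hudef
  have huDA : ∀ t : ℝ, 0 < t → HasDerivAt u (g t / (w t) ^ 2) t := by
    intro t ht
    have h := (hDA t).div (hw1DA t ht) (hwpos t).ne'
    convert h using 1
    all_goals rfl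
  have huw : ∀ t : ℝ, u t * w t = φ t := fun t => div_mul_cancel₀ _ (hwpos t).ne'
  -- g ≤ 0 on [R, ∞)
  have hgle : ∀ x, R ≤ x → g x ≤ 0 := by
    intro x₁ hx₁
    by_contra hcon
    push_neg at hcon
    have hgrow : ∀ x, x₁ + 1 ≤ x → g x₁ ≤ φ x := by
      intro x hx
      have hx1pos : 0 < x₁ := lt_of_lt_of_le hRpos hx₁
      have hxm1R : R ≤ x - 1 := by linarith
      have hxR : R ≤ x := by linarith
      have hxm1pos : 0 < x - 1 := lt_of_lt_of_le hRpos hxm1R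
      have hxpos : 0 < x := by linarith
      set κ : ℝ := g x₁ / (w (x - 1)) ^ 2 with hκdef
      -- F = u - κ t is monotone on [x-1, x]
      have hF : MonotoneOn (fun t => u t - κ * t) (Set.Icc (x - 1) x) := by
        apply monotoneOn_of_deriv_nonneg (convex_Icc _ _)
        · intro t ht
          have htpos : 0 < t := lt_of_lt_of_le hxm1pos ht.1
          exact ((huDA t htpos).sub ((hasDerivAt_id t).const_mul κ)).continuousAt.continuousWithinAt
        · intro t ht
          rw [interior_Icc] at ht
          have htpos : 0 < t := lt_of_lt_of_le hxm1pos ht.1.le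
          exact ((huDA t htpos).sub
            ((hasDerivAt_id t).const_mul κ)).differentiableAt.differentiableWithinAt
        · intro t ht
          rw [interior_Icc] at ht
          have htpos : 0 < t := lt_of_lt_of_le hxm1pos ht.1.le
          have hd : HasDerivAt (fun t => u t - κ * t) (g t / w t ^ 2 - κ) t := by
            have h := (huDA t htpos).sub ((hasDerivAt_id t).const_mul κ)
            simp only [mul_one] at h
            exact h
          rw [hd.deriv]
          have htR : R ≤ t := le_trans hxm1R ht.1.le
          have hgt : g x₁ ≤ g t :=
            hgmono (Set.mem_Ici.mpr hx₁) (Set.mem_Ici.mpr htR) (by linarith [ht.1])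
          have hwle : w t ≤ w (x - 1) := by
            apply Real.exp_le_exp.mpr
            have : (x - 1) ^ θ ≤ t ^ θ :=
              Real.rpow_le_rpow hxm1pos.le ht.1.le hθpos.le
            nlinarith
          have hw2le : (w t) ^ 2 ≤ (w (x - 1)) ^ 2 :=
            pow_le_pow_left₀ (hwpos t).le hwle 2
          have : κ ≤ g t / (w t) ^ 2 := by
            rw [hκdef]
            apply div_le_div₀ (le_trans hcon.le hgt) hgt (pow_pos (hwpos t) 2) hw2le
          linarith
      have hFle := hF (Set.mem_Icc.mpr ⟨le_refl _, by linarith⟩)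
        (Set.mem_Icc.mpr ⟨by linarith, le_refl _⟩) (by linarith)
      -- hFle : u (x-1) - κ (x-1) ≤ u x - κ x, so u x ≥ u (x-1) + κ ≥ κ
      have hum1 : 0 ≤ u (x - 1) := le_of_lt (div_pos (hpos _) (hwpos _))
      have hux : κ ≤ u x := by simp only at hFle; nlinarith
      -- φ x = u x * w x ≥ κ * w x ≥ g x₁
      have hκw : g x₁ ≤ κ * w x := by
        have hE : 0 ≤ 2 * (cc * (x - 1) ^ θ) - cc * x ^ θ := by
          have hh := hhalf x (by linarith)
          nlinarith
        have hwsq : (w (x - 1)) ^ 2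
            = Real.exp (-(cc * (x - 1) ^ θ) + -(cc * (x - 1) ^ θ)) := by
          simp only [hwdef]
          rw [Real.exp_add, pow_two]
        have hκval : κ * w x
            = g x₁ * Real.exp (2 * (cc * (x - 1) ^ θ) - cc * x ^ θ) := by
          rw [hκdef, hwsq]
          simp only [hwdef]
          rw [div_mul_eq_mul_div, mul_div_assoc, ← Real.exp_sub]
          congr 2
          ring
        calc g x₁ = g x₁ * 1 := by ring
          _ ≤ g x₁ * Real.exp (2 * (cc * (x - 1) ^ θ) - cc * x ^ θ) :=
              mul_le_mul_of_nonneg_left (Real.one_le_exp hE) hcon.le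
          _ = κ * w x := hκval.symm
      calc g x₁ ≤ κ * w x := hκw
        _ ≤ u x * w x := mul_le_mul_of_nonneg_right hux (hwpos x).le
        _ = φ x := huw x
    exact not_integrable_tail hInt (pow_pos hcon 2)
      (fun y hy => pow_le_pow_left₀ hcon.le (hgrow y hy) 2)
  -- u is antitone on [R, ∞), giving the pointwise bound on φ
  have hu_anti : AntitoneOn u (Set.Ici R) := by
    apply antitoneOn_of_deriv_nonpos (convex_Ici R)
    · exact fun x hx => (huDA x (lt_of_lt_of_le hRpos hx)).continuousAt.continuousWithinAt
    · intro x hx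
      rw [interior_Ici] at hx
      exact (huDA x (lt_of_lt_of_le hRpos hx.le)).differentiableAt.differentiableWithinAt
    · intro x hx
      rw [interior_Ici] at hx
      rw [(huDA x (lt_of_lt_of_le hRpos hx.le)).deriv]
      exact div_nonpos_of_nonpos_of_nonneg (hgle x hx.le) (sq_nonneg _)
  have hφbound : ∀ x, R ≤ x → φ x ≤ (φ R / w R) * w x := by
    intro x hx
    have h := hu_anti (Set.mem_Ici.mpr le_rfl) (Set.mem_Ici.mpr hx) hx
    calc φ x = u x * w x := (huw x).symm
      _ ≤ u R * w x := mul_le_mul_of_nonneg_right h (hwpos x).le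
      _ = (φ R / w R) * w x := rfl
  -- final bound via MVT
  set A : ℝ := φ R / w R with hAdef
  have hApos : 0 < A := div_pos (hpos R) (hwpos R)
  refine ⟨A, cc / 2, R + 1, hApos, by positivity, by linarith, ?_⟩
  intro x hx
  have hx1R : R ≤ x - 1 := by linarith
  have hxR : R ≤ x := by linarith
  have hxpos : 0 < x := lt_of_lt_of_le hRpos hxR
  obtain ⟨ξ, hξ, hslope⟩ := exists_hasDerivAt_eq_slope φ (deriv φ)
    (show x - 1 < x by linarith) hφdiff.continuous.continuousOn
    (fun t _ => (hφdiff t).hasDerivAt)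
  rw [show x - (x - 1) = 1 by ring, div_one] at hslope
  have hξR : R ≤ ξ := le_trans hx1R hξ.1.le
  have hDle : deriv φ ξ ≤ deriv φ x :=
    hmonoD (Set.mem_Ici.mpr hξR) (Set.mem_Ici.mpr hxR) hξ.2.le
  have hDx_neg := hDneg x hxR
  rw [abs_of_neg hDx_neg]
  have h1 : -deriv φ x ≤ φ (x - 1) := by
    have := hpos x
    linarith [hslope]
  have h2 : φ (x - 1) ≤ A * w (x - 1) := hφbound _ hx1R
  have h3 : w (x - 1) ≤ Real.exp (-(cc / 2) * x ^ θ) := by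
    rw [hwdef]
    apply Real.exp_le_exp.mpr
    have hh := hhalf x (by linarith)
    nlinarith
  calc -deriv φ x ≤ A * w (x - 1) := le_trans h1 h2
    _ ≤ A * Real.exp (-(cc / 2) * x ^ θ) := mul_le_mul_of_nonneg_left h3 hApos.le

/-- Tail bound for the derivative of the ground state: there exist `C, c > 0` such that
`|φ₀'(x)| ≤ C exp(-c |x|^{(2+α)/2})` for all `x`. -/
theorem ground_state_derivative_tail (α : ℝ) (hα : 0 < α)
    (lam₀ : ℝ) (hlam₀ : 0 < lam₀) (φ₀ : ℝ → ℝ)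
    (hφ : IsEigenfunction α lam₀ φ₀)
    (hpos : ∀ x : ℝ, 0 < φ₀ x)
    (hnorm : (∫ x : ℝ, (φ₀ x) ^ 2) = 1) :
    ∃ C c : ℝ, 0 < C ∧ 0 < c ∧
      ∀ x : ℝ, |deriv φ₀ x| ≤ C * Real.exp (-c * |x| ^ ((2 + α) / 2)) := by
  obtain ⟨hC2, -, hInt, hODE⟩ := hφ
  set θ : ℝ := (2 + α) / 2 with hθdef
  have hθpos : 0 < θ := by rw [hθdef]; linarith
  have hφdiff : Differentiable ℝ φ₀ := hC2.differentiable (by norm_num)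
  have h11 : ContDiff ℝ ((1 : ℕ) + 1) φ₀ := by exact_mod_cast hC2
  have hD1 : ContDiff ℝ 1 (deriv φ₀) := by
    have := (contDiff_succ_iff_deriv.mp h11).2.2
    exact_mod_cast this
  have hDdiff : Differentiable ℝ (deriv φ₀) := hD1.differentiable one_ne_zero
  have hDcont : Continuous (deriv φ₀) := hDdiff.continuous
  -- reflected function
  set ψ : ℝ → ℝ := fun x => φ₀ (-x) with hψdef
  have hψC2 : ContDiff ℝ 2 ψ := hC2.comp (contDiff_id.neg)
  have hψInt : Integrable (fun x : ℝ => (ψ x) ^ 2) := by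
    have := hInt.comp_neg
    exact this
  have hψpos : ∀ x, 0 < ψ x := fun x => hpos (-x)
  have hdψ : ∀ x, deriv ψ x = -deriv φ₀ (-x) := by
    intro x
    have h : HasDerivAt ψ (deriv φ₀ (-x) * (-1)) x :=
      HasDerivAt.comp x (hφdiff (-x)).hasDerivAt (hasDerivAt_neg x)
    rw [h.deriv]; ring
  have hdψ2 : ∀ x, deriv (deriv ψ) x = deriv (deriv φ₀) (-x) := by
    intro x
    have hfun : deriv ψ = fun y => -deriv φ₀ (-y) := funext hdψ
    rw [hfun]
    have h1 : HasDerivAt (fun y : ℝ => deriv φ₀ (-y)) (deriv (deriv φ₀) (-x) * (-1)) x :=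
      HasDerivAt.comp x (hDdiff (-x)).hasDerivAt (hasDerivAt_neg x)
    have h2 := h1.neg
    rw [show (fun y => -deriv φ₀ (-y)) = -fun y => deriv φ₀ (-y) from rfl, h2.deriv]; ring
  have hψODE : ∀ x : ℝ, -(deriv (deriv ψ) x) + |x| ^ α * ψ x = lam₀ * ψ x := by
    intro x
    rw [hdψ2]
    have := hODE (-x)
    rwa [abs_neg] at this
  obtain ⟨C₁, c₁, R₁, hC₁, hc₁, hR₁, h₁⟩ :=
    one_sided_tail α lam₀ hα hlam₀ φ₀ hC2 hInt hODE hpos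
  obtain ⟨C₂, c₂, R₂, hC₂, hc₂, hR₂, h₂⟩ :=
    one_sided_tail α lam₀ hα hlam₀ ψ hψC2 hψInt hψODE hψpos
  set Rm : ℝ := max R₁ R₂ with hRmdef
  have hRmpos : 0 < Rm := lt_of_lt_of_le one_pos (le_trans hR₁ (le_max_left _ _))
  obtain ⟨B, hB⟩ := (isCompact_Icc (a := -Rm) (b := Rm)).exists_bound_of_continuousOn
    hDcont.continuousOn
  set cf : ℝ := min c₁ c₂ with hcfdef
  have hcfpos : 0 < cf := lt_min hc₁ hc₂
  set Cf : ℝ := max (max C₁ C₂) ((max B 1) * Real.exp (cf * Rm ^ θ)) with hCfdef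
  have hCfpos : 0 < Cf := lt_of_lt_of_le hC₁ (le_trans (le_max_left _ _) (le_max_left _ _))
  refine ⟨Cf, cf, hCfpos, hcfpos, ?_⟩
  intro x
  rcases le_or_gt |x| Rm with hcase | hcase
  · -- compact region
    have hxmem : x ∈ Set.Icc (-Rm) Rm := by
      constructor <;> [linarith [neg_abs_le x]; linarith [le_abs_self x]]
    have hBx : |deriv φ₀ x| ≤ max B 1 := by
      have := hB x hxmem
      rw [Real.norm_eq_abs] at this
      exact le_trans this (le_max_left _ _)
    have hexp1 : (1:ℝ) ≤ Real.exp (cf * Rm ^ θ) * Real.exp (-cf * |x| ^ θ) := by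
      rw [← Real.exp_add]
      apply Real.one_le_exp
      have : |x| ^ θ ≤ Rm ^ θ := Real.rpow_le_rpow (abs_nonneg x) hcase hθpos.le
      nlinarith
    calc |deriv φ₀ x| ≤ max B 1 := hBx
      _ ≤ (max B 1) * (Real.exp (cf * Rm ^ θ) * Real.exp (-cf * |x| ^ θ)) := by
          apply le_mul_of_one_le_right (le_trans zero_le_one (le_max_right _ _)) hexp1
      _ = ((max B 1) * Real.exp (cf * Rm ^ θ)) * Real.exp (-cf * |x| ^ θ) := by ring
      _ ≤ Cf * Real.exp (-cf * |x| ^ θ) := by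
          apply mul_le_mul_of_nonneg_right (le_max_right _ _) (Real.exp_pos _).le
  · rcases le_or_gt 0 x with hx0 | hx0
    · -- right tail
      have hxabs : |x| = x := abs_of_nonneg hx0
      have hxR₁ : R₁ ≤ x := by
        rw [hxabs] at hcase
        exact le_trans (le_max_left _ _) hcase.le
      have hb := h₁ x hxR₁
      rw [hxabs]
      calc |deriv φ₀ x| ≤ C₁ * Real.exp (-c₁ * x ^ θ) := hb
        _ ≤ Cf * Real.exp (-cf * x ^ θ) := by
            apply mul_le_mul (le_trans (le_max_left _ _) (le_max_left _ _))
              (Real.exp_le_exp.mpr ?_) (Real.exp_pos _).le hCfpos.le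
            have hxθ : (0:ℝ) ≤ x ^ θ := Real.rpow_nonneg hx0 θ
            have : cf ≤ c₁ := min_le_left _ _
            nlinarith
    · -- left tail
      have hxabs : |x| = -x := abs_of_neg hx0
      have hxR₂ : R₂ ≤ -x := by
        rw [hxabs] at hcase
        exact le_trans (le_max_right _ _) hcase.le
      have hb := h₂ (-x) hxR₂
      have hdval : deriv ψ (-x) = -deriv φ₀ x := by
        rw [hdψ (-x), neg_neg]
      rw [hdval, abs_neg] at hb
      rw [hxabs]
      calc |deriv φ₀ x| ≤ C₂ * Real.exp (-c₂ * (-x) ^ θ) := hb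
        _ ≤ Cf * Real.exp (-cf * (-x) ^ θ) := by
            apply mul_le_mul (le_trans (le_max_right _ _) (le_max_left _ _))
              (Real.exp_le_exp.mpr ?_) (Real.exp_pos _).le hCfpos.le
            have hxθ : (0:ℝ) ≤ (-x) ^ θ := Real.rpow_nonneg (by linarith) θ
            have : cf ≤ c₂ := min_le_right _ _
            nlinarith
end

section
/- Let λ > 0 be an eigenvalue of 𝓛 and φ an eigenfunction for λ. Then φ has no zero in [λ^{1/α}, ∞). Moreover, if φ(x) > 0 for all x ≥ λ^{1/α}, then φ is convex on [λ^{1/α}, ∞) and φ'(x) < 0 for all x ≥ λ^{1/α}, so φ is strictly decreasing on [λ^{1/α}, ∞). -/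
open MeasureTheory

/-- `lam` is an eigenvalue of the Sturm–Liouville operator `𝓛 = -d²/dx² + |x|^α`. -/
def IsEigenvalue (α lam : ℝ) : Prop := ∃ φ : ℝ → ℝ, IsEigenfunction α lam φ

open Set in
/-- A continuous function bounded below by a positive constant on a right ray
is not integrable. -/
lemma aux_not_integrable (f : ℝ → ℝ) (c x₁ : ℝ) (hc : 0 < c)
    (h : ∀ x ∈ Ici x₁, c ≤ f x) (hf : Integrable f) : False := by
  have h1 : IntegrableOn f (Ici x₁) := hf.integrableOn
  have h2 : IntegrableOn (fun _ : ℝ => c) (Ici x₁) := by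
    refine h1.mono' aestronglyMeasurable_const ?_
    filter_upwards [ae_restrict_mem measurableSet_Ici] with x hx
    rw [Real.norm_eq_abs, abs_of_pos hc]
    exact h x hx
  rw [integrableOn_const_iff] at h2
  rcases h2 with h2 | h2
  · exact hc.ne' (by simpa using h2)
  · simp [Real.volume_Ici] at h2

open Set in
/-- Grönwall: a nonnegative differentiable function with `|g'| ≤ K g` on `[x₀, y]`
and `g x₀ = 0` vanishes at `y`. -/
lemma aux_gronwall_zero (g g' : ℝ → ℝ) (x₀ y K : ℝ) (hxy : x₀ ≤ y)
    (hg : ∀ x, HasDerivAt g (g' x) x) (h0 : g x₀ = 0) (hnn : ∀ x, 0 ≤ g x)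
    (hb : ∀ x ∈ Icc x₀ y, |g' x| ≤ K * g x) : g y = 0 := by
  have h := norm_le_gronwallBound_of_norm_deriv_right_le (f := g) (f' := g')
    (δ := 0) (K := K) (ε := 0) (a := x₀) (b := y)
    (fun x _ => (hg x).continuousAt.continuousWithinAt)
    (fun x _ => (hg x).hasDerivWithinAt)
    (by simp [h0])
    (fun x hx => by
      rw [Real.norm_eq_abs, Real.norm_eq_abs, abs_of_nonneg (hnn x), add_zero]
      exact hb x ⟨hx.1, hx.2.le⟩)
  have hy := h y ⟨hxy, le_rfl⟩
  rw [gronwallBound_ε0] at hy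
  simp only [zero_mul] at hy
  exact norm_le_zero_iff.mp hy

open Set in
/-- If a nonnegative differentiable function on `ℝ` vanishes at a point and satisfies
`|g'| ≤ K g` locally (with `K` depending on the bounded region), it vanishes everywhere. -/
lemma aux_zero_everywhere (g g' : ℝ → ℝ) (x₀ : ℝ)
    (hg : ∀ x, HasDerivAt g (g' x) x) (hnn : ∀ x, 0 ≤ g x) (h0 : g x₀ = 0)
    (hb : ∀ R : ℝ, ∃ K : ℝ, ∀ x : ℝ, |x| ≤ R → |g' x| ≤ K * g x) :
    ∀ y, g y = 0 := by
  intro y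
  rcases le_total x₀ y with hxy | hxy
  · obtain ⟨K, hK⟩ := hb (max |x₀| |y|)
    exact aux_gronwall_zero g g' x₀ y K hxy hg h0 hnn
      (fun x hx => hK x (abs_le_max_abs_abs hx.1 hx.2))
  · obtain ⟨K, hK⟩ := hb (max |y| |x₀|)
    have hGd : ∀ t, HasDerivAt (fun t => g (2 * x₀ - t)) (-(g' (2 * x₀ - t))) t := by
      intro t
      have h1 : HasDerivAt (fun t : ℝ => 2 * x₀ - t) (-1) t := by
        simpa using (hasDerivAt_id t).const_sub (2 * x₀)
      have := (hg (2 * x₀ - t)).comp t h1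
      simpa [mul_comm, Function.comp_def] using this
    have hres := aux_gronwall_zero (fun t => g (2 * x₀ - t))
      (fun t => -(g' (2 * x₀ - t))) x₀ (2 * x₀ - y) K (by linarith)
      hGd (by show g (2 * x₀ - x₀) = 0; rw [show 2 * x₀ - x₀ = x₀ by ring]; exact h0)
      (fun t => hnn _)
      (fun t ht => by
        rw [abs_neg]
        exact hK _ (abs_le_max_abs_abs (by linarith [ht.2]) (by linarith [ht.1])))
    simpa [show 2 * x₀ - (2 * x₀ - y) = y by ring] using hres

open Set in
/-- An eigenfunction `φ` for an eigenvalue `lam > 0` has no zero in `[lam^{1/α}, ∞)`;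
moreover, if `φ > 0` on `[lam^{1/α}, ∞)`, then `φ` is convex there, has negative
derivative there, and is strictly decreasing there. -/
theorem eigenfunction_convex_decreasing (α : ℝ) (hα : 0 < α) (lam : ℝ) (hpos : 0 < lam)
    (hlam : IsEigenvalue α lam) (φ : ℝ → ℝ) (hφ : IsEigenfunction α lam φ) :
    (∀ x : ℝ, lam ^ (1 / α) ≤ x → φ x ≠ 0) ∧
    ((∀ x : ℝ, lam ^ (1 / α) ≤ x → 0 < φ x) →
      ConvexOn ℝ (Set.Ici (lam ^ (1 / α))) φ ∧
      (∀ x : ℝ, lam ^ (1 / α) ≤ x → deriv φ x < 0) ∧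
      StrictAntiOn φ (Set.Ici (lam ^ (1 / α)))) := by
  obtain ⟨hC2, hne, hInt, heq⟩ := hφ
  set a := lam ^ (1 / α) with ha_def
  have ha : 0 < a := Real.rpow_pos_of_pos hpos _
  -- smoothness facts
  have hsm : Differentiable ℝ φ ∧ Differentiable ℝ (deriv φ) ∧
      Continuous (deriv (deriv φ)) := by
    rw [show (2 : WithTop ℕ∞) = 1 + 1 by norm_num, contDiff_succ_iff_deriv] at hC2
    obtain ⟨h1, -, h2⟩ := hC2
    rw [show (1 : WithTop ℕ∞) = 0 + 1 by norm_num, contDiff_succ_iff_deriv] at h2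
    exact ⟨h1, h2.1, h2.2.2.continuous⟩
  obtain ⟨hd1, hd2, hc3⟩ := hsm
  have heq' : ∀ x, deriv (deriv φ) x = (|x| ^ α - lam) * φ x := by
    intro x
    have h := heq x
    ring_nf
    ring_nf at h
    linarith
  have haα : a ^ α = lam := by
    rw [ha_def, ← Real.rpow_mul hpos.le, one_div_mul_cancel hα.ne', Real.rpow_one]
  have hq : ∀ x : ℝ, a ≤ x → lam ≤ |x| ^ α := by
    intro x hx
    have hx0 : (0 : ℝ) < x := lt_of_lt_of_le ha hx
    rw [abs_of_pos hx0, ← haα]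
    exact Real.rpow_le_rpow ha.le hx hα.le
  -- derivative of ψ = φ φ'
  have hψd : ∀ x, HasDerivAt (fun x => φ x * deriv φ x)
      (deriv φ x ^ 2 + (|x| ^ α - lam) * φ x ^ 2) x := by
    intro x
    have := ((hd1 x).hasDerivAt).mul ((hd2 x).hasDerivAt)
    refine this.congr_deriv ?_
    rw [heq' x]; ring
  -- derivative of φ²
  have hsqd : ∀ x, HasDerivAt (fun x => φ x ^ 2) (2 * (φ x * deriv φ x)) x := by
    intro x
    have := ((hd1 x).hasDerivAt).pow 2
    refine this.congr_deriv ?_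
    ring
  constructor
  · -- no zero in [a, ∞)
    intro x₀ hx₀ hzero
    by_cases hd0 : deriv φ x₀ = 0
    · -- Grönwall forces φ ≡ 0
      have hgd : ∀ x, HasDerivAt (fun x => φ x ^ 2 + deriv φ x ^ 2)
          (2 * (1 + (|x| ^ α - lam)) * (φ x * deriv φ x)) x := by
        intro x
        have h1 := ((hd1 x).hasDerivAt).pow 2
        have h2 := ((hd2 x).hasDerivAt).pow 2
        have := h1.add h2
        refine this.congr_deriv ?_
        rw [heq' x]; ring
      have hall := aux_zero_everywhere (fun x => φ x ^ 2 + deriv φ x ^ 2)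
        (fun x => 2 * (1 + (|x| ^ α - lam)) * (φ x * deriv φ x)) x₀ hgd
        (fun x => by positivity) (by simp [hzero, hd0])
        (by
          intro R
          refine ⟨1 + |R| ^ α + lam, ?_⟩
          intro x hxR
          have hxa : |x| ^ α ≤ |R| ^ α :=
            Real.rpow_le_rpow (abs_nonneg x) (le_trans hxR (le_abs_self R)) hα.le
          have hxa0 : (0 : ℝ) ≤ |x| ^ α := Real.rpow_nonneg (abs_nonneg x) α
          have h2p : |2 * (φ x * deriv φ x)| ≤ φ x ^ 2 + deriv φ x ^ 2 := by
            rw [abs_le]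
            constructor <;> nlinarith [sq_nonneg (φ x + deriv φ x), sq_nonneg (φ x - deriv φ x)]
          have h1q : |1 + (|x| ^ α - lam)| ≤ 1 + |R| ^ α + lam := by
            rw [abs_le]; constructor <;> [linarith; linarith]
          calc |2 * (1 + (|x| ^ α - lam)) * (φ x * deriv φ x)|
              = |1 + (|x| ^ α - lam)| * |2 * (φ x * deriv φ x)| := by
                rw [← abs_mul]; ring_nf
            _ ≤ (1 + |R| ^ α + lam) * (φ x ^ 2 + deriv φ x ^ 2) := by
                apply mul_le_mul h1q h2p (abs_nonneg _)
                have : (0:ℝ) ≤ |R| ^ α := Real.rpow_nonneg (abs_nonneg R) α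
                linarith)
      apply hne
      funext y
      have hgy : φ y ^ 2 + deriv φ y ^ 2 = 0 := hall y
      have h1 : (0:ℝ) ≤ φ y ^ 2 := sq_nonneg _
      have h2 : (0:ℝ) ≤ deriv φ y ^ 2 := sq_nonneg _
      have h3 : φ y ^ 2 = 0 := by linarith
      simpa using pow_eq_zero_iff (n := 2) (by norm_num) |>.mp h3
    · -- φ'(x₀) ≠ 0 : ψ = φ φ' becomes strictly positive, φ² eventually ≥ const
      have hψcont : Continuous fun x => φ x * deriv φ x :=
        hd1.continuous.mul hd2.continuous
      have hψmono : MonotoneOn (fun x => φ x * deriv φ x) (Ici x₀) := by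
        apply monotoneOn_of_deriv_nonneg (convex_Ici x₀) hψcont.continuousOn
          (fun x _ => (hψd x).differentiableAt.differentiableWithinAt)
        intro x hx
        rw [interior_Ici] at hx
        rw [(hψd x).deriv]
        have hxa : a ≤ x := le_trans hx₀ hx.le
        have := hq x hxa
        have := sq_nonneg (deriv φ x)
        nlinarith [sq_nonneg (φ x)]
      -- find δ where φ' ≠ 0
      have hev : ∀ᶠ z in nhds x₀, deriv φ z ≠ 0 :=
        hd2.continuous.continuousAt.eventually_ne hd0
      rw [Metric.eventually_nhds_iff] at hev
      obtain ⟨δ, hδ, hball⟩ := hev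
      set x₁ := x₀ + δ / 2 with hx₁def
      have hx₀x₁ : x₀ < x₁ := by rw [hx₁def]; linarith
      have hstrict : StrictMonoOn (fun x => φ x * deriv φ x) (Icc x₀ x₁) := by
        apply strictMonoOn_of_deriv_pos (convex_Icc x₀ x₁) hψcont.continuousOn
        intro x hx
        rw [interior_Icc] at hx
        rw [(hψd x).deriv]
        have hne' : deriv φ x ≠ 0 := by
          apply hball
          rw [Real.dist_eq, abs_of_pos (by linarith [hx.1])]
          have := hx.2
          rw [hx₁def] at this
          linarith
        have h1 : 0 < deriv φ x ^ 2 := by positivity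
        have hxa : a ≤ x := le_trans hx₀ hx.1.le
        have := hq x hxa
        nlinarith [sq_nonneg (φ x)]
      have hψ1 : 0 < φ x₁ * deriv φ x₁ := by
        have := hstrict ⟨le_rfl, hx₀x₁.le⟩ ⟨hx₀x₁.le, le_rfl⟩ hx₀x₁
        simpa [hzero] using this
      have hφ1 : φ x₁ ≠ 0 := by
        intro h; rw [h] at hψ1; simp at hψ1
      -- φ² is monotone on [x₀, ∞)
      have hψnn : ∀ x, x₀ ≤ x → 0 ≤ φ x * deriv φ x := by
        intro x hx
        have := hψmono (self_mem_Ici) hx hx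
        simpa [hzero] using this
      have hsqmono : MonotoneOn (fun x => φ x ^ 2) (Ici x₀) := by
        apply monotoneOn_of_deriv_nonneg (convex_Ici x₀)
          (hd1.continuous.pow 2).continuousOn
          (fun x _ => (hsqd x).differentiableAt.differentiableWithinAt)
        intro x hx
        rw [interior_Ici] at hx
        show 0 ≤ deriv (fun x => φ x ^ 2) x
        rw [(hsqd x).deriv]
        have := hψnn x hx.le
        linarith
      exact aux_not_integrable (fun x => φ x ^ 2) (φ x₁ ^ 2) x₁
        (by positivity)
        (fun x hx => hsqmono (mem_Ici.mpr hx₀x₁.le)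
          (mem_Ici.mpr (le_trans hx₀x₁.le hx)) hx) hInt
  · -- part 2
    intro hposφ
    have hdd : ∀ x, a ≤ x → 0 ≤ deriv (deriv φ) x := by
      intro x hx
      rw [heq' x]
      exact mul_nonneg (by linarith [hq x hx]) (hposφ x hx).le
    have hconv : ConvexOn ℝ (Ici a) φ := by
      apply convexOn_of_deriv2_nonneg (convex_Ici a) hd1.continuous.continuousOn
        hd1.differentiableOn hd2.differentiableOn
      intro x hx
      rw [interior_Ici] at hx
      show (0 : ℝ) ≤ deriv^[2] φ x
      have h2 : deriv^[2] φ x = deriv (deriv φ) x := by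
        simp [Function.iterate_succ, Function.iterate_one]
      rw [h2]
      exact hdd x hx.le
    have hmono' : MonotoneOn (deriv φ) (Ici a) :=
      monotoneOn_of_deriv_nonneg (convex_Ici a) hd2.continuous.continuousOn
        hd2.differentiableOn
        (fun x hx => hdd x (by rw [interior_Ici] at hx; exact hx.le))
    have hderivneg : ∀ x : ℝ, a ≤ x → deriv φ x < 0 := by
      intro x₀ hx₀
      by_contra hcon
      push_neg at hcon
      have hnn : ∀ x, x₀ ≤ x → 0 ≤ deriv φ x := fun x hx =>
        le_trans hcon (hmono' (mem_Ici.mpr hx₀) (mem_Ici.mpr (le_trans hx₀ hx)) hx)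
      have hmonoφ : MonotoneOn φ (Ici x₀) :=
        monotoneOn_of_deriv_nonneg (convex_Ici x₀) hd1.continuous.continuousOn
          hd1.differentiableOn
          (fun x hx => hnn x (by rw [interior_Ici] at hx; exact hx.le))
      exact aux_not_integrable (fun x => φ x ^ 2) (φ x₀ ^ 2) x₀
        (pow_pos (hposφ x₀ hx₀) 2)
        (fun x hx => by
          have h1 := hmonoφ self_mem_Ici hx hx
          show φ x₀ ^ 2 ≤ φ x ^ 2
          nlinarith [hposφ x₀ hx₀]) hInt
    exact ⟨hconv, hderivneg,
      strictAntiOn_of_deriv_neg (convex_Ici a) hd1.continuous.continuousOn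
        (fun x hx => hderivneg x (by rw [interior_Ici] at hx; exact hx.le))⟩
end

section
/- Every eigenfunction φ of 𝓛 (for any eigenvalue λ) satisfies φ(x) → 0 and φ'(x) → 0 as x → +∞, and likewise as x → −∞. -/
open MeasureTheory

open Filter Set Real in
private lemma mono_of_hasDeriv {f f' : ℝ → ℝ} (a : ℝ) (hf : ∀ x, HasDerivAt f (f' x) x)
    (h : ∀ x ∈ Set.Ici a, 0 ≤ f' x) : MonotoneOn f (Set.Ici a) := by
  apply monotoneOn_of_deriv_nonneg (convex_Ici a)
  · exact (Continuous.continuousOn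
      (continuous_iff_continuousAt.2 fun x => (hf x).differentiableAt.continuousAt))
  · exact fun x _ => (hf x).differentiableAt.differentiableWithinAt
  · intro x hx
    rw [(hf x).deriv]
    exact h x (le_of_lt (by simpa [interior_Ici] using hx))

open Filter Set Real in
private lemma anti_of_hasDeriv {f f' : ℝ → ℝ} (a : ℝ) (hf : ∀ x, HasDerivAt f (f' x) x)
    (h : ∀ x ∈ Set.Ici a, f' x ≤ 0) : AntitoneOn f (Set.Ici a) := by
  apply antitoneOn_of_deriv_nonpos (convex_Ici a)
  · exact (Continuous.continuousOn
      (continuous_iff_continuousAt.2 fun x => (hf x).differentiableAt.continuousAt))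
  · exact fun x _ => (hf x).differentiableAt.differentiableWithinAt
  · intro x hx
    rw [(hf x).deriv]
    exact h x (le_of_lt (by simpa [interior_Ici] using hx))

open Filter Set Real in
private lemma anti_of_hasDeriv' {f f' : ℝ → ℝ} (a : ℝ) (hc : ContinuousOn f (Set.Ici a))
    (hf : ∀ x ∈ Set.Ioi a, HasDerivAt f (f' x) x)
    (h : ∀ x ∈ Set.Ioi a, f' x ≤ 0) : AntitoneOn f (Set.Ici a) := by
  apply antitoneOn_of_deriv_nonpos (convex_Ici a) hc
  · intro x hx
    rw [interior_Ici] at hx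
    exact (hf x hx).differentiableAt.differentiableWithinAt
  · intro x hx
    rw [interior_Ici] at hx
    rw [(hf x hx).deriv]
    exact h x hx

open Filter Set Real in
private lemma no_int_lower_bound {u : ℝ → ℝ} (hu : Integrable u) (a ε : ℝ) (hε : 0 < ε)
    (h : ∀ x ∈ Set.Ici a, ε ≤ u x) : False := by
  have h1 : IntegrableOn (fun _ : ℝ => ε) (Set.Ici a) := by
    apply MeasureTheory.Integrable.mono (hu.integrableOn) aestronglyMeasurable_const
    refine ae_restrict_of_forall_mem measurableSet_Ici fun x hx => ?_
    have hx' := h x hx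
    simp only [Real.norm_eq_abs]
    rw [abs_of_pos hε, abs_of_nonneg (le_trans hε.le hx')]
    exact hx'
  rw [integrableOn_const_iff] at h1
  rcases h1 with h1 | h1
  · exact hε.ne' (by simpa using h1)
  · simp [Real.volume_Ici] at h1

open Filter Set Real in
private lemma tendsto_of_sq_tendsto {g : ℝ → ℝ} {l : Filter ℝ}
    (h : Filter.Tendsto (fun x => g x ^ 2) l (nhds 0)) : Filter.Tendsto g l (nhds 0) := by
  have h1 : Filter.Tendsto (fun x => Real.sqrt (g x ^ 2)) l (nhds 0) := by
    simpa [Function.comp_def] using (Real.continuous_sqrt.tendsto 0).comp h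
  simp only [Real.sqrt_sq_eq_abs] at h1
  have h2 : Filter.Tendsto (fun x => -|g x|) l (nhds 0) := by simpa using h1.neg
  exact tendsto_of_tendsto_of_tendsto_of_le_of_le h2 h1
    (fun x => neg_abs_le _) (fun x => le_abs_self _)

open Filter Set Real in
private lemma eigen_reflect {α lam : ℝ} {φ : ℝ → ℝ} (h : IsEigenfunction α lam φ) :
    IsEigenfunction α lam (fun x => φ (-x)) := by
  obtain ⟨h1, h2, h3, h4⟩ := h
  refine ⟨h1.comp contDiff_neg, ?_, h3.comp_neg, ?_⟩
  · intro hz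
    apply h2
    funext x
    have := congrFun hz (-x)
    simpa using this
  · intro x
    have e2 : deriv (deriv fun y => φ (-y)) x = deriv (deriv φ) (-x) := by
      have e1 : (deriv fun y => φ (-y)) = fun y => -deriv φ (-y) :=
        funext fun y => deriv_comp_neg φ y
      rw [e1]
      have e3 : deriv (fun y => -deriv φ (-y)) x = -deriv (fun y => deriv φ (-y)) x :=
        deriv.neg
      rw [e3, deriv_comp_neg]
      ring
    rw [e2]
    have := h4 (-x)
    simpa [abs_neg] using this

open Filter Set Real in
private lemma eigen_atTop (α : ℝ) (hα : 0 < α) (lam : ℝ)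
    (φ : ℝ → ℝ) (hφ : IsEigenfunction α lam φ) :
    Filter.Tendsto φ Filter.atTop (nhds 0) ∧
      Filter.Tendsto (deriv φ) Filter.atTop (nhds 0) := by
  obtain ⟨hsm, -, hint, hode⟩ := hφ
  have hφd : Differentiable ℝ φ := hsm.differentiable (by norm_num)
  have hφ'd : Differentiable ℝ (deriv φ) := by
    have h2 : ContDiff ℝ (1 + 1) φ := by norm_num; exact hsm
    exact ((contDiff_succ_iff_deriv.mp h2).2.2).differentiable (by norm_num)
  set f' : ℝ → ℝ := deriv φ with hf'def
  set f'' : ℝ → ℝ := deriv (deriv φ) with hf''def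
  have hD1 : ∀ x, HasDerivAt φ (f' x) x := fun x => (hφd x).hasDerivAt
  have hD2 : ∀ x, HasDerivAt f' (f'' x) x := fun x => (hφ'd x).hasDerivAt
  -- the threshold R
  set R : ℝ := max 1 ((|lam| + 1) ^ α⁻¹) with hRdef
  have hR1 : (1 : ℝ) ≤ R := le_max_left _ _
  have hR0 : (0 : ℝ) < R := lt_of_lt_of_le one_pos hR1
  have hq1 : ∀ x ∈ Ici R, |lam| + 1 ≤ x ^ α := by
    intro x hx
    have hbase : (0 : ℝ) ≤ (|lam| + 1) := by positivity
    have h1 : ((|lam| + 1) ^ α⁻¹ : ℝ) ≤ x := le_trans (le_max_right _ _) hx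
    have h0 : (0 : ℝ) ≤ (|lam| + 1) ^ α⁻¹ := Real.rpow_nonneg hbase _
    calc |lam| + 1 = ((|lam| + 1) ^ α⁻¹) ^ α := (Real.rpow_inv_rpow hbase hα.ne').symm
      _ ≤ x ^ α := Real.rpow_le_rpow h0 h1 hα.le
  have hqge1 : ∀ x ∈ Ici R, 1 ≤ x ^ α - lam := by
    intro x hx
    have := hq1 x hx
    have := le_abs_self lam
    linarith
  -- the ODE in the form f'' = q f on [R, ∞)
  have hode' : ∀ x ∈ Ici R, f'' x = (x ^ α - lam) * φ x := by
    intro x hx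
    have hxpos : (0 : ℝ) < x := lt_of_lt_of_le hR0 hx
    have h1 := hode x
    rw [abs_of_pos hxpos] at h1
    have h2 : f'' x = x ^ α * φ x - lam * φ x := by
      rw [hf''def]; linarith
    rw [h2]; ring
  -- the functions u = φ², u' and u''
  set u : ℝ → ℝ := fun y => φ y ^ 2 with hudef
  set u' : ℝ → ℝ := fun y => 2 * φ y * f' y with hu'def
  set u'' : ℝ → ℝ := fun y => 2 * f' y ^ 2 + 2 * φ y * f'' y with hu''def
  have hU1 : ∀ x, HasDerivAt u (u' x) x := by
    intro x
    have := (hD1 x).fun_pow 2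
    simpa [hu'def, mul_comm, mul_assoc] using this
  have hU2 : ∀ x, HasDerivAt u' (u'' x) x := by
    intro x
    have := ((hD1 x).const_mul 2).fun_mul (hD2 x)
    refine this.congr_deriv ?_
    simp [hu''def]; ring
  have hunn : ∀ x, 0 ≤ u x := fun x => sq_nonneg _
  have hU''0 : ∀ x ∈ Ici R, 0 ≤ u'' x := by
    intro x hx
    have h1 := hqge1 x hx
    have h2 := hode' x hx
    simp only [hu''def]
    rw [h2]
    nlinarith [sq_nonneg (φ x), sq_nonneg (f' x)]
  -- step B : u' ≤ 0 on [R, ∞)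
  have hU'le : ∀ a ∈ Ici R, u' a ≤ 0 := by
    intro a ha
    by_contra hcon
    push_neg at hcon
    have hmono : MonotoneOn u' (Ici a) :=
      mono_of_hasDeriv a hU2 (fun x hx => hU''0 x (mem_Ici.2 (le_trans (mem_Ici.1 ha) (mem_Ici.1 hx))))
    have key : ∀ x ∈ Ici a, u a + u' a * (x - a) ≤ u x := by
      intro x hx
      have hm : MonotoneOn (fun y => u y - u' a * y) (Ici a) := by
        apply mono_of_hasDeriv a
          (f' := fun y => u' y - u' a * 1)
          (fun y => (hU1 y).sub ((hasDerivAt_id y).const_mul (u' a)))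
        intro y hy
        have := hmono (self_mem_Ici) hy hy
        linarith
      have := hm (self_mem_Ici) hx hx
      simp only at this
      linarith
    apply no_int_lower_bound hint (a + 1) (u' a) hcon
    intro x hx
    have hx' : a ≤ x := by simp only [mem_Ici] at hx; linarith
    have h1 := key x hx'
    have h2 : (1 : ℝ) ≤ x - a := by simp only [mem_Ici] at hx; linarith
    nlinarith [hunn a, hcon]
  -- u is antitone on [R, ∞)
  have huanti : AntitoneOn u (Ici R) := anti_of_hasDeriv R hU1 hU'le
  -- step C : v = u' + u ≤ 0 on [R, ∞)
  set v : ℝ → ℝ := fun y => u' y + u y with hvdef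
  have hV : ∀ x, HasDerivAt v (u'' x + u' x) x := fun x => (hU2 x).add (hU1 x)
  have hvle : ∀ a ∈ Ici R, v a ≤ 0 := by
    intro a ha
    by_contra hcon
    push_neg at hcon
    have hg : ∀ x, HasDerivAt (fun y => Real.exp (-y) * v y)
        (Real.exp (-x) * (u'' x - u x)) x := by
      intro x
      have h1 : HasDerivAt (fun y : ℝ => Real.exp (-y)) (-Real.exp (-x)) x := by
        simpa [Function.comp_def] using (Real.hasDerivAt_exp (-x)).comp x (hasDerivAt_neg x)
      have := h1.fun_mul (hV x)
      refine this.congr_deriv ?_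
      simp only [hvdef]
      ring
    have hgmono : MonotoneOn (fun y => Real.exp (-y) * v y) (Ici a) := by
      apply mono_of_hasDeriv a hg
      intro x hx
      have hxR : x ∈ Ici R := mem_Ici.2 (le_trans (mem_Ici.1 ha) (mem_Ici.1 hx))
      apply mul_nonneg (Real.exp_pos _).le
      have h1 := hqge1 x hxR
      have h2 := hode' x hxR
      simp only [hu''def, hudef]
      rw [h2]
      nlinarith [sq_nonneg (φ x), sq_nonneg (f' x)]
    have hgrow : Tendsto (fun x => Real.exp (x - a) * v a) atTop atTop := by
      apply Tendsto.atTop_mul_const hcon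
      exact Real.tendsto_exp_atTop.comp (tendsto_atTop_add_const_right _ (-a) tendsto_id)
    obtain ⟨x, hx1, hx2⟩ :=
      ((hgrow.eventually_ge_atTop (u R + 1)).and (eventually_ge_atTop (max a R))).exists
    have hxa : a ≤ x := le_trans (le_max_left _ _) hx2
    have hxR : R ≤ x := le_trans (le_max_right _ _) hx2
    have h6 := hgmono (self_mem_Ici) (mem_Ici.2 hxa) hxa
    have h5 : Real.exp (x - a) * v a ≤ v x := by
      calc Real.exp (x - a) * v a = Real.exp x * (Real.exp (-a) * v a) := by
            rw [Real.exp_sub, Real.exp_neg]; ring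
        _ ≤ Real.exp x * (Real.exp (-x) * v x) :=
            mul_le_mul_of_nonneg_left h6 (Real.exp_pos x).le
        _ = v x := by rw [Real.exp_neg]; field_simp
    have h7 : v x ≤ u R := by
      have := hU'le x hxR
      have := huanti (self_mem_Ici) (mem_Ici.2 hxR) hxR
      simp only [hvdef]
      linarith
    linarith
  -- step D : the exponential bound
  have hexp : ∀ x ∈ Ici R, u x ≤ u R * Real.exp (R - x) := by
    have hG : ∀ x, HasDerivAt (fun y => Real.exp y * u y) (Real.exp x * v x) x := by
      intro x
      have := (Real.hasDerivAt_exp x).fun_mul (hU1 x)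
      refine this.congr_deriv ?_
      simp only [hvdef]
      ring
    have hGanti : AntitoneOn (fun y => Real.exp y * u y) (Ici R) := by
      apply anti_of_hasDeriv R hG
      intro x hx
      exact mul_nonpos_of_nonneg_of_nonpos (Real.exp_pos _).le (hvle x hx)
    intro x hx
    have h1 := hGanti (self_mem_Ici) hx hx
    calc u x = Real.exp (-x) * (Real.exp x * u x) := by rw [Real.exp_neg]; field_simp
      _ ≤ Real.exp (-x) * (Real.exp R * u R) :=
          mul_le_mul_of_nonneg_left h1 (Real.exp_pos _).le
      _ = u R * Real.exp (R - x) := by rw [Real.exp_sub, Real.exp_neg]; ring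
  -- step E : q·u → 0 at +∞
  have hqu0 : Tendsto (fun x => (x ^ α - lam) * u x) atTop (nhds 0) := by
    have hlim : Tendsto (fun x : ℝ => 2 * u R * Real.exp R * (x ^ α * Real.exp (-x)))
        atTop (nhds 0) := by
      have := (tendsto_rpow_mul_exp_neg_mul_atTop_nhds_zero α 1 one_pos).const_mul
        (2 * u R * Real.exp R)
      simpa using this
    apply squeeze_zero' (g := fun x => 2 * u R * Real.exp R * (x ^ α * Real.exp (-x)))
      ?_ ?_ hlim
    · filter_upwards [eventually_ge_atTop R] with x hx
      have h1 := hqge1 x hx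
      have h2 := hunn x
      nlinarith
    · filter_upwards [eventually_ge_atTop R] with x hx
      have h1 := hq1 x hx
      have h2 := hexp x hx
      have h3 : x ^ α - lam ≤ 2 * x ^ α := by
        have := abs_le.mp (le_refl |lam|)
        have hl : -|lam| ≤ lam := neg_abs_le lam
        linarith
      have h4 : (0 : ℝ) ≤ u R := hunn R
      have h5 : (0 : ℝ) < Real.exp (R - x) := Real.exp_pos _
      have h6 : (0 : ℝ) ≤ x ^ α - lam := by
        have := hqge1 x hx
        linarith
      calc (x ^ α - lam) * u x ≤ 2 * x ^ α * (u R * Real.exp (R - x)) := by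
            apply mul_le_mul h3 h2 (hunn x)
            nlinarith
        _ = 2 * u R * Real.exp R * (x ^ α * Real.exp (-x)) := by
            rw [Real.exp_sub, Real.exp_neg]
            field_simp
  -- step F : u → 0 at +∞
  have hu0 : Tendsto u atTop (nhds 0) := by
    apply squeeze_zero' (g := fun x => (x ^ α - lam) * u x) ?_ ?_ hqu0
    · exact Eventually.of_forall hunn
    · filter_upwards [eventually_ge_atTop R] with x hx
      have h1 := hqge1 x hx
      have h2 := hunn x
      nlinarith
  -- step G : W antitone
  set W : ℝ → ℝ := fun y => f' y ^ 2 - (y ^ α - lam) * u y with hWdef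
  have hWanti : AntitoneOn W (Ici R) := by
    apply anti_of_hasDeriv' R
      (f' := fun x => 2 * f' x * f'' x - (α * x ^ (α - 1) * u x + (x ^ α - lam) * u' x))
    · apply ContinuousOn.sub
      · exact ((hφ'd.continuous.pow 2).continuousOn)
      · apply ContinuousOn.mul ?_ ((continuous_pow 2).comp hφd.continuous).continuousOn
        apply ContinuousOn.sub ?_ continuousOn_const
        intro x hx
        exact (Real.continuousAt_rpow_const x α
          (Or.inl (ne_of_gt (lt_of_lt_of_le hR0 hx)))).continuousWithinAt
    · intro x hx
      have hxpos : (0 : ℝ) < x := lt_of_lt_of_le hR0 (le_of_lt hx)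
      have hq' : HasDerivAt (fun y : ℝ => y ^ α - lam) (α * x ^ (α - 1)) x := by
        have := Real.hasDerivAt_rpow_const (x := x) (p := α) (Or.inl hxpos.ne')
        exact this.sub_const lam
      have h1 := (hD2 x).fun_pow 2
      have h2 := hq'.fun_mul (hU1 x)
      have := h1.fun_sub h2
      refine this.congr_deriv ?_
      ring
    · intro x hx
      have hxR : x ∈ Ici R := mem_Ici.2 (le_of_lt (mem_Ioi.1 hx))
      have hxpos : (0 : ℝ) < x := lt_of_lt_of_le hR0 hxR
      have h2 := hode' x hxR
      rw [h2]
      have h3 : (0 : ℝ) ≤ x ^ (α - 1) := Real.rpow_nonneg hxpos.le _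
      simp only [hu'def, hudef]
      nlinarith [sq_nonneg (φ x), mul_nonneg (mul_nonneg hα.le h3) (sq_nonneg (φ x))]
  -- step H : f'² → 0 at +∞
  have hf'sq : Tendsto (fun x => f' x ^ 2) atTop (nhds 0) := by
    rw [NormedAddCommGroup.tendsto_nhds_zero]
    intro ε hε
    have hx0 : ∃ x0 ∈ Ici R, W x0 < ε / 2 := by
      by_contra hcon
      push_neg at hcon
      -- then u'' ≥ ε on [R,∞)
      have hstep : ∀ x ∈ Ici R, ε ≤ u'' x := by
        intro x hx
        have h1 := hcon x hx
        have h2 := hqge1 x hx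
        have h3 := hunn x
        have h4 : ε / 2 ≤ f' x ^ 2 - (x ^ α - lam) * u x := h1
        simp only [hu''def]
        have h5 := hode' x hx
        rw [h5]
        simp only [hudef] at h4 h3 ⊢
        nlinarith
      -- so u' grows without bound, contradiction with u' ≤ 0
      have hm : MonotoneOn (fun y => u' y - ε * y) (Ici R) := by
        apply mono_of_hasDeriv R
          (f' := fun y => u'' y - ε * 1)
          (fun y => (hU2 y).sub ((hasDerivAt_id y).const_mul ε))
        intro y hy
        have := hstep y hy
        linarith
      set x : ℝ := max R (R + (1 - u' R) / ε) with hxdef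
      have hxR : R ≤ x := le_max_left _ _
      have h6 := hm (self_mem_Ici) (mem_Ici.2 hxR) hxR
      have h7 : (1 - u' R) / ε ≤ x - R := by
        have := le_max_right R (R + (1 - u' R) / ε)
        simp only [hxdef]
        linarith [le_max_right R (R + (1 - u' R) / ε)]
      have h8 : 1 - u' R ≤ ε * (x - R) := by
        rw [div_le_iff₀ hε] at h7
        linarith [h7]
      have h9 := hU'le x (mem_Ici.2 hxR)
      simp only at h6
      nlinarith
    obtain ⟨x0, hx0R, hx0lt⟩ := hx0
    have h1 : ∀ᶠ x in atTop, W x ≤ ε / 2 := by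
      filter_upwards [eventually_ge_atTop x0] with x hx
      exact le_trans (hWanti hx0R (mem_Ici.2 (le_trans hx0R hx)) hx) hx0lt.le
    have h2 : ∀ᶠ x in atTop, (x ^ α - lam) * u x < ε / 2 :=
      hqu0.eventually_lt_const (by linarith)
    filter_upwards [h1, h2] with x hx1 hx2
    have h3 : f' x ^ 2 = W x + (x ^ α - lam) * u x := by
      simp only [hWdef]; ring
    rw [Real.norm_eq_abs, abs_of_nonneg (sq_nonneg _), h3]
    linarith
  -- conclusion
  constructor
  · exact tendsto_of_sq_tendsto hu0
  · exact tendsto_of_sq_tendsto hf'sq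

/-- Every eigenfunction of `𝓛` and its derivative tend to zero at `±∞`. -/
theorem eigenfunction_tendsto_zero (α : ℝ) (hα : 0 < α) (lam : ℝ)
    (φ : ℝ → ℝ) (hφ : IsEigenfunction α lam φ) :
    Filter.Tendsto φ Filter.atTop (nhds 0) ∧
    Filter.Tendsto (deriv φ) Filter.atTop (nhds 0) ∧
    Filter.Tendsto φ Filter.atBot (nhds 0) ∧
    Filter.Tendsto (deriv φ) Filter.atBot (nhds 0) := by
  obtain ⟨ht1, ht2⟩ := eigen_atTop α hα lam φ hφ
  obtain ⟨hb1, hb2⟩ := eigen_atTop α hα lam _ (eigen_reflect hφ)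
  refine ⟨ht1, ht2, ?_, ?_⟩
  · have := hb1.comp Filter.tendsto_neg_atBot_atTop
    apply this.congr
    intro x
    simp [Function.comp]
  · have := (hb2.comp Filter.tendsto_neg_atBot_atTop).neg
    rw [neg_zero] at this
    apply this.congr
    intro x
    simp only [Function.comp]
    rw [deriv_comp_neg]
    simp
end

section
/- For every T ∈ (0,1) and every ε₁, ε₂ ∈ (0, T/10) with ε₂ ≤ (1−T)/10, there exist functions q_*, q^* : [0,T] → (0,∞) such that: (i) q_* and q^* are nondecreasing and Lipschitz continuous on [0,T], and there is a finite set F ⊂ [0,T] such that both are differentiable at every t ∈ [0,T]∖F; (ii) q_* and q^* are constant on [0,ε₁] and on [T−ε₂, T]; (iii) q_*(t) = (1−t)^{−α} = q^*(t) for all t ∈ [2ε₁, T−2ε₂]; (iv) q_*(t) ≤ (1−t)^{−α} ≤ q^*(t) for all t ∈ [0,T]; (v) for all t ∈ [0,2ε₁]: 1 − 4ε₁ ≤ q_*(t)·(1−t)^α ≤ q^*(t)·(1−t)^α ≤ 1 + 3ε₁; (vi) for all t ∈ [T−2ε₂, T]: 1 − 2ε₂/(1−T) ≤ q_*(t)·(1−t)^α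 ≤ q^*(t)·(1−t)^α ≤ 1 + 5ε₂/(1−T); (vii) for all t ∈ [0,T]: 1/2 ≤ q_*(t)·(1−t)^α ≤ q^*(t)·(1−t)^α ≤ 2; (viii) for every t ∈ [0,T]∖F and for q = q_* and q = q^*: q'(t) ≤ (8/(1−t))·q(t); (ix) for q = q_* and q = q^*: ∫₀^T |(1−t)^{−κ} − q(t)^{2/(2+α)}| dt ≤ 10ε₁² + 10ε₂²/(1−T)^{κ+1}. -/
open MeasureTheory

section CQauxSection
open Set Real

namespace CQaux
noncomputable def phis (e c t : ℝ) : ℝ := max 0 (min (2*(t-e)) (min t c))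
/-- clamp for `q^*` -/
noncomputable def phit (e b T t : ℝ) : ℝ := min T (max e (max t (2*t - b)))

lemma phis_nonneg (e c t : ℝ) : 0 ≤ phis e c t := le_max_left _ _

lemma phis_le (e c t : ℝ) (ht : 0 ≤ t) : phis e c t ≤ t :=
  max_le ht ((min_le_right _ _).trans (min_le_left _ _))

lemma phis_le_c (e c t : ℝ) (hc : 0 ≤ c) : phis e c t ≤ c :=
  max_le hc ((min_le_right _ _).trans (min_le_right _ _))

lemma phit_le_T (e b T t : ℝ) : phit e b T t ≤ T := min_le_left _ _

lemma phit_ge (e b T t : ℝ) (ht : t ≤ T) : t ≤ phit e b T t :=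
  le_min ht ((le_max_left _ _).trans (le_max_right _ _))

lemma phis_eq1 (e c t : ℝ) (h : t ≤ e) : phis e c t = 0 :=
  max_eq_left ((min_le_left _ _).trans (by linarith))

lemma phis_eq2 (e c t : ℝ) (h1 : e ≤ t) (h2 : t ≤ 2*e) (h3 : 2*e ≤ c) :
    phis e c t = 2*(t-e) := by
  unfold phis
  rw [min_eq_left (le_min (by linarith) (by linarith)), max_eq_right (by linarith)]

lemma phis_eq3 (e c t : ℝ) (h1 : 2*e ≤ t) (h2 : t ≤ c) (h0 : 0 ≤ e) :
    phis e c t = t := by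
  unfold phis
  rw [min_eq_left h2, min_eq_right (by linarith), max_eq_right (by linarith)]

lemma phis_eq4 (e c t : ℝ) (h1 : c ≤ t) (h3 : 2*e ≤ c) (hc : 0 ≤ c) :
    phis e c t = c := by
  unfold phis
  rw [min_eq_right h1, min_eq_right (by linarith), max_eq_right hc]

lemma phit_eq1 (e b T t : ℝ) (h : t ≤ e) (h2 : e ≤ b) (h3 : e ≤ T) (h0 : 0 ≤ e) :
    phit e b T t = e := by
  unfold phit
  rw [max_eq_left (max_le (by linarith) (by linarith)), min_eq_right h3]

lemma phit_eq2 (e b T t : ℝ) (h1 : e ≤ t) (h2 : t ≤ b) (h3 : t ≤ T) :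
    phit e b T t = t := by
  unfold phit
  rw [show max t (2*t-b) = t from max_eq_left (by linarith), max_eq_right h1,
    min_eq_right h3]

lemma phit_eq3 (e b T t : ℝ) (h1 : b ≤ t) (h2 : 2*t - b ≤ T) (h3 : e ≤ t) :
    phit e b T t = 2*t - b := by
  unfold phit
  rw [show max t (2*t-b) = 2*t-b from max_eq_right (by linarith),
    show max e (2*t-b) = 2*t-b from max_eq_right (by linarith), min_eq_right h2]

lemma phit_eq4 (e b T t : ℝ) (h1 : T ≤ 2*t - b) (h3 : e ≤ T) :
    phit e b T t = T := by
  unfold phit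
  apply min_eq_left
  exact le_trans (le_trans h1 (le_max_right t _)) (le_max_right e _)

lemma phis_mono (e c : ℝ) : Monotone (phis e c) := by
  intro x y h
  unfold phis
  exact max_le_max le_rfl (min_le_min (by linarith) (min_le_min h le_rfl))

lemma phit_mono (e b T : ℝ) : Monotone (phit e b T) := by
  intro x y h
  unfold phit
  exact min_le_min le_rfl (max_le_max le_rfl (max_le_max h (by linarith)))

lemma phis_lip (e c : ℝ) : LipschitzWith 2 (phis e c) := by
  apply LipschitzWith.of_dist_le_mul
  intro x y
  rw [Real.dist_eq, Real.dist_eq]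
  unfold phis
  refine le_trans (abs_max_sub_max_le_max _ _ _ _) ?_
  have h1 : |min (2*(x-e)) (min x c) - min (2*(y-e)) (min y c)| ≤ 2 * |x - y| := by
    refine le_trans (abs_min_sub_min_le_max _ _ _ _) (max_le ?_ ?_)
    · rw [show 2*(x-e) - 2*(y-e) = 2*(x-y) by ring, abs_mul]
      simp [abs_of_nonneg]
    · refine le_trans (abs_min_sub_min_le_max _ _ _ _) (max_le ?_ ?_)
      · nlinarith [abs_nonneg (x - y)]
      · simp only [sub_self, abs_zero]
        positivity
  refine max_le ?_ (by push_cast; linarith)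
  simp only [sub_self, abs_zero]
  positivity

lemma phit_lip (e b T : ℝ) : LipschitzWith 2 (phit e b T) := by
  apply LipschitzWith.of_dist_le_mul
  intro x y
  rw [Real.dist_eq, Real.dist_eq]
  unfold phit
  have habs : |x - y| ≤ 2 * |x-y| := by nlinarith [abs_nonneg (x-y)]
  refine le_trans (abs_min_sub_min_le_max _ _ _ _) (max_le ?_ ?_)
  · simp only [sub_self, abs_zero]
    positivity
  refine le_trans (abs_max_sub_max_le_max _ _ _ _) (max_le ?_ ?_)
  · simp only [sub_self, abs_zero]
    positivity
  refine le_trans (abs_max_sub_max_le_max _ _ _ _) (max_le habs ?_)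
  rw [show 2*x - b - (2*y - b) = 2*(x-y) by ring, abs_mul]
  simp [abs_of_nonneg]


lemma onesub_hasDerivAt {p x : ℝ} (hx : x < 1) :
    HasDerivAt (fun y : ℝ => (1-y) ^ (-p)) (p * (1-x)^(-p-1)) x := by
  have h1 : HasDerivAt (fun y : ℝ => 1 - y) (-1) x := (hasDerivAt_id x).const_sub 1
  have h2 := (Real.hasDerivAt_rpow_const (x := 1-x) (p := -p)
    (Or.inl (by linarith : (1:ℝ)-x ≠ 0))).comp x h1
  exact h2.congr_deriv (by ring)

lemma onesub_mvt {p C a b x y : ℝ} (hp : 0 ≤ p) (hb : b < 1)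
    (hC : ∀ z ∈ Icc a b, p * (1-z)^(-p-1) ≤ C) (hx : x ∈ Icc a b) (hy : y ∈ Icc a b) :
    |(1-y)^(-p) - (1-x)^(-p)| ≤ C * |y - x| := by
  have := (convex_Icc a b).norm_image_sub_le_of_norm_hasDerivWithin_le
    (f := fun y : ℝ => (1-y)^(-p)) (f' := fun z => p * (1-z)^(-p-1)) (C := C)
    (fun z hz => (onesub_hasDerivAt (lt_of_le_of_lt hz.2 hb)).hasDerivWithinAt)
    (fun z hz => by
      rw [Real.norm_eq_abs, abs_of_nonneg (mul_nonneg hp (Real.rpow_nonneg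
        (by linarith [hz.2] : (0:ℝ) ≤ 1 - z) _))]
      exact hC z hz) hx hy
  simpa [Real.norm_eq_abs] using this

lemma neg_rpow_mul (α u v : ℝ) (hu : 0 < u) (hv : 0 < v) :
    u ^ (-α) * v ^ α = (v / u) ^ α := by
  rw [Real.div_rpow hv.le hu.le, Real.rpow_neg hu.le, div_eq_mul_inv, mul_comm]

lemma rpow_ratio_upper {α r R M : ℝ} (hα0 : 0 < α) (hα2 : α ≤ 2) (hr : 0 < r) (hrR : r ≤ R)
    (hR : 1 ≤ R) (hM : R^2 ≤ M) : r ^ α ≤ M := by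
  rcases le_total r 1 with h | h
  · exact le_trans (Real.rpow_le_one hr.le h hα0.le) (by nlinarith)
  · calc r ^ α ≤ r ^ (2:ℝ) := Real.rpow_le_rpow_of_exponent_le h hα2
      _ = r ^ 2 := Real.rpow_two r
      _ ≤ M := by nlinarith

lemma rpow_ratio_lower {α r m L : ℝ} (hα0 : 0 < α) (hα2 : α ≤ 2) (hm : 0 < m) (hmr : m ≤ r)
    (hm1 : m ≤ 1) (hL : L ≤ m^2) : L ≤ r ^ α := by
  rcases le_total r 1 with h | h
  · calc L ≤ m^2 := hL
      _ ≤ r^2 := by nlinarith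
      _ = r ^ (2:ℝ) := (Real.rpow_two r).symm
      _ ≤ r ^ α := Real.rpow_le_rpow_of_exponent_ge (by linarith) h hα2
  · exact le_trans (by nlinarith) (Real.one_le_rpow h hα0.le)

lemma deriv_bd {α a t u : ℝ} (hα0 : 0 < α) (hα2 : α ≤ 2) (ha : 0 ≤ a) (ha2 : a ≤ 2)
    (ht : t < 1) (hu : 0 < u) (h2 : 1 - t ≤ 2*u) :
    a * α * u^(-α-1) ≤ 8/(1-t) * u^(-α) := by
  have hr : u^(-α-1) = u^(-α) * u⁻¹ := by
    rw [show -α-1 = -α + (-1) by ring, Real.rpow_add hu, Real.rpow_neg_one]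
  rw [hr, show a * α * (u^(-α) * u⁻¹) = (a*α*u⁻¹) * u^(-α) by ring,
    show 8/(1-t) * u^(-α) = (8/(1-t)) * u^(-α) by ring]
  have hx : 0 < 1 - t := by linarith
  apply mul_le_mul_of_nonneg_right _ (Real.rpow_nonneg hu.le _)
  have h3 : u⁻¹ ≤ 2/(1-t) := by
    rw [inv_eq_one_div, div_le_div_iff₀ hu hx]; linarith
  calc a*α*u⁻¹ ≤ 4 * (2/(1-t)) := by
        apply mul_le_mul (by nlinarith) h3 (by positivity) (by norm_num)
      _ = 8/(1-t) := by ring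

lemma local_affine {α a b t : ℝ} (hφ : a*t+b < 1) (φ : ℝ → ℝ)
    (hev : φ =ᶠ[nhds t] fun s => a*s+b) :
    DifferentiableAt ℝ (fun s => (1 - φ s)^(-α)) t ∧
      deriv (fun s => (1 - φ s)^(-α)) t = a * α * (1 - φ t)^(-α-1) := by
  have hlin : HasDerivAt (fun s : ℝ => a*s+b) a t := by
    simpa using ((hasDerivAt_id t).const_mul a).add_const b
  have hg : HasDerivAt (fun s : ℝ => (1-(a*s+b))^(-α)) (a * α * (1-(a*t+b))^(-α-1)) t := by
    have := (onesub_hasDerivAt (p := α) hφ).comp t hlin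
    exact this.congr_deriv (by ring)
  have hev' : (fun s => (1-φ s)^(-α)) =ᶠ[nhds t] (fun s : ℝ => (1-(a*s+b))^(-α)) :=
    hev.mono fun s hs => by simp only []; rw [hs]
  have hφt : φ t = a*t+b := hev.eq_of_nhds
  refine ⟨hev'.differentiableAt_iff.mpr hg.differentiableAt, ?_⟩
  rw [hev'.deriv_eq, hg.deriv, hφt]

lemma contOn_onesub_rpow (p M : ℝ) (hM : M < 1) :
    ContinuousOn (fun t : ℝ => (1-t)^(-p)) (Iic M) := by
  intro t ht
  apply ContinuousAt.continuousWithinAt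
  have h1 : (1:ℝ) - t ≠ 0 := by
    have : t ≤ M := ht
    have : t < 1 := lt_of_le_of_lt this hM
    intro h; linarith [sub_eq_zero.mp h]
  exact (Real.continuousAt_rpow_const (1-t) (-p) (Or.inl h1)).comp
    (by fun_prop : Continuous fun t : ℝ => 1 - t).continuousAt


end CQaux

end CQauxSection

open Set Real CQaux

set_option maxHeartbeats 2000000 in
/-- Construction of the approximations `q_*` (here `qs`) and `q^*` (here `qst`) of the
inhomogeneity `t ↦ (1-t)^{-α}` on `[0, T]`, with `κ = 2α/(2+α)`. -/
theorem construction_q_star (α : ℝ) (hα : α ∈ Set.Ioo (0:ℝ) 2)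
    (T ε₁ ε₂ : ℝ) (hT : T ∈ Set.Ioo (0:ℝ) 1)
    (hε₁ : ε₁ ∈ Set.Ioo (0:ℝ) (T / 10)) (hε₂ : ε₂ ∈ Set.Ioo (0:ℝ) (T / 10))
    (hε₂' : ε₂ ≤ (1 - T) / 10) :
    ∃ qs qst : ℝ → ℝ, ∃ F : Finset ℝ,
      -- q_*, q^* take values in (0, ∞)
      (∀ t ∈ Set.Icc (0:ℝ) T, 0 < qs t ∧ 0 < qst t) ∧
      -- (i) nondecreasing, Lipschitz on [0,T], differentiable off a finite set
      MonotoneOn qs (Set.Icc (0:ℝ) T) ∧ MonotoneOn qst (Set.Icc (0:ℝ) T) ∧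
      (∃ K : NNReal, LipschitzOnWith K qs (Set.Icc (0:ℝ) T)) ∧
      (∃ K : NNReal, LipschitzOnWith K qst (Set.Icc (0:ℝ) T)) ∧
      (∀ t ∈ Set.Icc (0:ℝ) T, t ∉ F →
        DifferentiableAt ℝ qs t ∧ DifferentiableAt ℝ qst t) ∧
      -- (ii) constant on [0, ε₁] and on [T - ε₂, T]
      (∀ t ∈ Set.Icc (0:ℝ) ε₁, qs t = qs 0 ∧ qst t = qst 0) ∧
      (∀ t ∈ Set.Icc (T - ε₂) T, qs t = qs T ∧ qst t = qst T) ∧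
      -- (iii) equality on the middle part
      (∀ t ∈ Set.Icc (2 * ε₁) (T - 2 * ε₂),
        qs t = (1 - t) ^ (-α) ∧ qst t = (1 - t) ^ (-α)) ∧
      -- (iv) lower/upper bounds
      (∀ t ∈ Set.Icc (0:ℝ) T, qs t ≤ (1 - t) ^ (-α) ∧ (1 - t) ^ (-α) ≤ qst t) ∧
      -- (v) near 0
      (∀ t ∈ Set.Icc (0:ℝ) (2 * ε₁),
        1 - 4 * ε₁ ≤ qs t * (1 - t) ^ α ∧
        qs t * (1 - t) ^ α ≤ qst t * (1 - t) ^ α ∧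
        qst t * (1 - t) ^ α ≤ 1 + 3 * ε₁) ∧
      -- (vi) near T
      (∀ t ∈ Set.Icc (T - 2 * ε₂) T,
        1 - 2 * ε₂ / (1 - T) ≤ qs t * (1 - t) ^ α ∧
        qs t * (1 - t) ^ α ≤ qst t * (1 - t) ^ α ∧
        qst t * (1 - t) ^ α ≤ 1 + 5 * ε₂ / (1 - T)) ∧
      -- (vii) global comparison
      (∀ t ∈ Set.Icc (0:ℝ) T,
        1 / 2 ≤ qs t * (1 - t) ^ α ∧
        qs t * (1 - t) ^ α ≤ qst t * (1 - t) ^ α ∧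
        qst t * (1 - t) ^ α ≤ 2) ∧
      -- (viii) logarithmic derivative bound
      (∀ t ∈ Set.Icc (0:ℝ) T, t ∉ F →
        deriv qs t ≤ (8 / (1 - t)) * qs t ∧
        deriv qst t ≤ (8 / (1 - t)) * qst t) ∧
      -- (ix) integral bound
      ((∫ t in (0:ℝ)..T,
          |(1 - t) ^ (-(2 * α / (2 + α))) - qs t ^ (2 / (2 + α))|)
        ≤ 10 * ε₁ ^ 2 + 10 * ε₂ ^ 2 / (1 - T) ^ (2 * α / (2 + α) + 1)) ∧
      ((∫ t in (0:ℝ)..T,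
          |(1 - t) ^ (-(2 * α / (2 + α))) - qst t ^ (2 / (2 + α))|)
        ≤ 10 * ε₁ ^ 2 + 10 * ε₂ ^ 2 / (1 - T) ^ (2 * α / (2 + α) + 1)) := by
  obtain ⟨hα0, hα2⟩ := hα
  obtain ⟨hT0, hT1⟩ := hT
  obtain ⟨he1, he1'⟩ := hε₁
  obtain ⟨he2, he2'⟩ := hε₂
  have he1lt : ε₁ < 1/10 := by linarith
  have he2lt : ε₂ < 1/10 := by linarith
  have h10e2' : 10*ε₂ ≤ 1 - T := by linarith
  have hee : 2*ε₁ + 2*ε₂ ≤ T := by linarith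
  set κ := 2*α/(2+α) with hκdef
  have h2α : (0:ℝ) < 2 + α := by linarith
  have hκ0 : 0 < κ := by positivity
  have hκ1 : κ ≤ 1 := by rw [hκdef, div_le_one h2α]; linarith
  set c := T - ε₂ with hcdef
  set b := T - 2*ε₂ with hbdef
  have hbc : b ≤ c := by rw [hbdef, hcdef]; linarith
  have h2e1b : 2*ε₁ ≤ b := by rw [hbdef]; linarith
  have he1b : ε₁ ≤ b := by linarith
  have hcT : c ≤ T := by rw [hcdef]; linarith
  have hc0 : 0 < c := by rw [hcdef]; linarith
  have hc1 : c < 1 := by linarith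
  have he1T : ε₁ ≤ T := by linarith
  set φ₁ : ℝ → ℝ := phis ε₁ c with hφ₁def
  set φ₂ : ℝ → ℝ := phit ε₁ b T with hφ₂def
  -- basic facts about the clamps
  have hφ₁0 : ∀ t, 0 ≤ φ₁ t := fun t => phis_nonneg _ _ _
  have hφ₁c : ∀ t, φ₁ t ≤ c := fun t => phis_le_c _ _ _ hc0.le
  have h1φ₁ : ∀ t, 0 < 1 - φ₁ t := fun t => by have := hφ₁c t; linarith
  have hφ₁le : ∀ t, 0 ≤ t → φ₁ t ≤ t := fun t ht => phis_le _ _ _ ht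
  have hφ₂T : ∀ t, φ₂ t ≤ T := fun t => phit_le_T _ _ _ _
  have h1φ₂ : ∀ t, 0 < 1 - φ₂ t := fun t => by have := hφ₂T t; linarith
  have hφ₂ge : ∀ t, t ≤ T → t ≤ φ₂ t := fun t ht => phit_ge _ _ _ _ ht
  have hφ₂0 : ∀ t, 0 ≤ φ₂ t := fun t =>
    le_min (by linarith) ((by linarith : (0:ℝ) ≤ ε₁).trans (le_max_left _ _))
  -- region values
  have E1 : ∀ t, t ≤ ε₁ → φ₁ t = 0 := fun t h => phis_eq1 _ _ _ h
  have E2 : ∀ t, ε₁ ≤ t → t ≤ 2*ε₁ → φ₁ t = 2*(t-ε₁) := fun t h h' =>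
    phis_eq2 _ _ _ h h' (by linarith)
  have E3 : ∀ t, 2*ε₁ ≤ t → t ≤ c → φ₁ t = t := fun t h h' =>
    phis_eq3 _ _ _ h h' he1.le
  have E4 : ∀ t, c ≤ t → φ₁ t = c := fun t h => phis_eq4 _ _ _ h (by linarith) hc0.le
  have G1 : ∀ t, t ≤ ε₁ → φ₂ t = ε₁ := fun t h => phit_eq1 _ _ _ _ h he1b he1T he1.le
  have G2 : ∀ t, ε₁ ≤ t → t ≤ b → φ₂ t = t := fun t h h' =>
    phit_eq2 _ _ _ _ h h' (by linarith)
  have G3 : ∀ t, b ≤ t → t ≤ c → φ₂ t = 2*t - b := fun t h h' =>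
    phit_eq3 _ _ _ _ h (by linarith) (by linarith)
  have G4 : ∀ t, c ≤ t → φ₂ t = T := fun t h =>
    phit_eq4 _ _ _ _ (by linarith) he1T
  -- distance claims
  have D1 : ∀ t, 0 ≤ t → t ≤ 2*ε₁ → t - φ₁ t ≤ ε₁ := by
    intro t h0 h2
    rcases le_total t ε₁ with h | h
    · rw [E1 t h]; linarith
    · rw [E2 t h h2]; linarith
  have D1' : ∀ t, 0 ≤ t → t ≤ 2*ε₁ → φ₂ t - t ≤ ε₁ ∧ φ₂ t ≤ 2*ε₁ := by
    intro t h0 h2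
    rcases le_total t ε₁ with h | h
    · rw [G1 t h]; constructor <;> linarith
    · rw [G2 t h (by linarith)]; constructor <;> linarith
  have D2 : ∀ t, b ≤ t → t ≤ T → t - φ₁ t ≤ ε₂ := by
    intro t hb ht
    rcases le_total t c with h | h
    · rw [E3 t (by linarith) h]; linarith
    · rw [E4 t h]; linarith
  have D2' : ∀ t, b ≤ t → t ≤ T → φ₂ t - t ≤ ε₂ := by
    intro t hb ht
    rcases le_total t c with h | h
    · rw [G3 t hb h]; linarith
    · rw [G4 t h]; linarith
  have Cs : ∀ t, 0 ≤ t → t ≤ T → 8*(t - φ₁ t) ≤ 1 - t := by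
    intro t h0 hTt
    rcases le_total t (2*ε₁) with h | h
    · have := D1 t h0 h; linarith
    · rcases le_total t c with h' | h'
      · rw [E3 t h h']; linarith
      · have := D2 t (by linarith) hTt; linarith
  have Ct : ∀ t, 0 ≤ t → t ≤ T → 8*(φ₂ t - t) ≤ 1 - t := by
    intro t h0 hTt
    rcases le_total t (2*ε₁) with h | h
    · have := (D1' t h0 h).1; linarith
    · rcases le_total t b with h' | h'
      · rw [G2 t (by linarith) h']; linarith
      · have := D2' t h' hTt; linarith
  -- pointwise order qs ≤ (1-t)^(-α) ≤ qst
  have hord : ∀ t, 0 ≤ t → t ≤ T →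
      (1 - φ₁ t)^(-α) ≤ (1-t)^(-α) ∧ (1-t)^(-α) ≤ (1 - φ₂ t)^(-α) := by
    intro t h0 hTt
    have h1t : 0 < 1 - t := by linarith
    constructor
    · exact Real.rpow_le_rpow_of_nonpos h1t (by have := hφ₁le t h0; linarith) (by linarith)
    · exact Real.rpow_le_rpow_of_nonpos (h1φ₂ t) (by have := hφ₂ge t hTt; linarith) (by linarith)
  have hmidmul : ∀ t, 0 ≤ t → t ≤ T →
      (1 - φ₁ t)^(-α) * (1-t)^α ≤ (1 - φ₂ t)^(-α) * (1-t)^α := by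
    intro t h0 hTt
    have := hord t h0 hTt
    exact mul_le_mul_of_nonneg_right (this.1.trans this.2) (Real.rpow_nonneg (by linarith) _)
  have hratio₁ : ∀ t, t ≤ T → (1 - φ₁ t)^(-α) * (1-t)^α = ((1-t)/(1-φ₁ t))^α :=
    fun t ht => neg_rpow_mul α _ _ (h1φ₁ t) (by linarith)
  have hratio₂ : ∀ t, t ≤ T → (1 - φ₂ t)^(-α) * (1-t)^α = ((1-t)/(1-φ₂ t))^α :=
    fun t ht => neg_rpow_mul α _ _ (h1φ₂ t) (by linarith)
  -- differentiability keys
  have key₁ : ∀ t, 0 ≤ t → t ≤ T → t ≠ ε₁ → t ≠ 2*ε₁ → t ≠ c →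
      DifferentiableAt ℝ (fun s => (1 - φ₁ s)^(-α)) t ∧
      deriv (fun s => (1 - φ₁ s)^(-α)) t ≤ 8/(1-t) * (1 - φ₁ t)^(-α) := by
    intro t ht0 htT hn1 hn2 hn3
    have ht1 : t < 1 := by linarith
    have hbd : 1 - t ≤ 2*(1 - φ₁ t) := by have := hφ₁le t ht0; linarith
    rcases lt_trichotomy t ε₁ with h | h | h
    · obtain ⟨hd, hD⟩ := local_affine (α := α) (a := 0) (b := 0) (by norm_num) φ₁
        (Filter.eventually_of_mem (Iio_mem_nhds h)
          (fun s hs => by simp only []; rw [E1 s (le_of_lt hs)]; ring))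
      exact ⟨hd, by rw [hD]; exact deriv_bd hα0 hα2.le le_rfl (by norm_num) ht1 (h1φ₁ t) hbd⟩
    · exact absurd h hn1
    rcases lt_trichotomy t (2*ε₁) with h2 | h2 | h2
    · obtain ⟨hd, hD⟩ := local_affine (α := α) (a := 2) (b := -(2*ε₁))
        (by linarith) φ₁
        (Filter.eventually_of_mem (Ioo_mem_nhds h h2)
          (fun s hs => by simp only []; rw [E2 s hs.1.le hs.2.le]; ring))
      exact ⟨hd, by rw [hD]; exact deriv_bd hα0 hα2.le (by norm_num) le_rfl ht1 (h1φ₁ t) hbd⟩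
    · exact absurd h2 hn2
    rcases lt_trichotomy t c with h3 | h3 | h3
    · obtain ⟨hd, hD⟩ := local_affine (α := α) (a := 1) (b := 0)
        (by linarith) φ₁
        (Filter.eventually_of_mem (Ioo_mem_nhds h2 h3)
          (fun s hs => by simp only []; rw [E3 s hs.1.le hs.2.le]; ring))
      exact ⟨hd, by rw [hD]; exact deriv_bd hα0 hα2.le (by norm_num) (by norm_num) ht1 (h1φ₁ t) hbd⟩
    · exact absurd h3 hn3
    · obtain ⟨hd, hD⟩ := local_affine (α := α) (a := 0) (b := c)
        (by linarith) φ₁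
        (Filter.eventually_of_mem (Ioi_mem_nhds h3)
          (fun s hs => by simp only []; rw [E4 s (le_of_lt hs)]; ring))
      exact ⟨hd, by rw [hD]; exact deriv_bd hα0 hα2.le le_rfl (by norm_num) ht1 (h1φ₁ t) hbd⟩
  have key₂ : ∀ t, 0 ≤ t → t ≤ T → t ≠ ε₁ → t ≠ b → t ≠ c →
      DifferentiableAt ℝ (fun s => (1 - φ₂ s)^(-α)) t ∧
      deriv (fun s => (1 - φ₂ s)^(-α)) t ≤ 8/(1-t) * (1 - φ₂ t)^(-α) := by
    intro t ht0 htT hn1 hn2 hn3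
    have ht1 : t < 1 := by linarith
    have hbd : 1 - t ≤ 2*(1 - φ₂ t) := by have := Ct t ht0 htT; linarith
    rcases lt_trichotomy t ε₁ with h | h | h
    · obtain ⟨hd, hD⟩ := local_affine (α := α) (a := 0) (b := ε₁)
        (by linarith) φ₂
        (Filter.eventually_of_mem (Iio_mem_nhds h)
          (fun s hs => by simp only []; rw [G1 s (le_of_lt hs)]; ring))
      exact ⟨hd, by rw [hD]; exact deriv_bd hα0 hα2.le le_rfl (by norm_num) ht1 (h1φ₂ t) hbd⟩
    · exact absurd h hn1
    rcases lt_trichotomy t b with h2 | h2 | h2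
    · obtain ⟨hd, hD⟩ := local_affine (α := α) (a := 1) (b := 0)
        (by linarith) φ₂
        (Filter.eventually_of_mem (Ioo_mem_nhds h h2)
          (fun s hs => by simp only []; rw [G2 s hs.1.le hs.2.le]; ring))
      exact ⟨hd, by rw [hD]; exact deriv_bd hα0 hα2.le (by norm_num) (by norm_num) ht1 (h1φ₂ t) hbd⟩
    · exact absurd h2 hn2
    rcases lt_trichotomy t c with h3 | h3 | h3
    · obtain ⟨hd, hD⟩ := local_affine (α := α) (a := 2) (b := -b)
        (by linarith) φ₂
        (Filter.eventually_of_mem (Ioo_mem_nhds h2 h3)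
          (fun s hs => by simp only []; rw [G3 s hs.1.le hs.2.le]; ring))
      exact ⟨hd, by rw [hD]; exact deriv_bd hα0 hα2.le (by norm_num) le_rfl ht1 (h1φ₂ t) hbd⟩
    · exact absurd h3 hn3
    · obtain ⟨hd, hD⟩ := local_affine (α := α) (a := 0) (b := T)
        (by linarith) φ₂
        (Filter.eventually_of_mem (Ioi_mem_nhds h3)
          (fun s hs => by simp only []; rw [G4 s (le_of_lt hs)]; ring))
      exact ⟨hd, by rw [hD]; exact deriv_bd hα0 hα2.le le_rfl (by norm_num) ht1 (h1φ₂ t) hbd⟩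
  -- integral bound (generic in the clamp)
  have hAT : (0:ℝ) < 1 - T := by linarith
  have intbound : ∀ φ : ℝ → ℝ, Continuous φ → (∀ t, 0 ≤ φ t) → (∀ t, φ t ≤ T) →
      (∀ t, 2*ε₁ ≤ t → t ≤ b → φ t = t) →
      (∀ t, 0 ≤ t → t ≤ 2*ε₁ → |t - φ t| ≤ ε₁ ∧ φ t ≤ 2*ε₁) →
      (∀ t, b ≤ t → t ≤ T → |t - φ t| ≤ ε₂) →
      (∫ t in (0:ℝ)..T, |(1-t)^(-κ) - (1-φ t)^(-κ)|)
        ≤ 10*ε₁^2 + 10*ε₂^2/(1-T)^(κ+1) := by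
    intro φ hφcont hφ0' hφT' hmid hleft hright
    have hgcont : ContinuousOn (fun t : ℝ => (1-t)^(-κ)) (Iic T) := contOn_onesub_rpow κ T hT1
    have hcont : ContinuousOn (fun t : ℝ => |(1-t)^(-κ) - (1-φ t)^(-κ)|) (Icc 0 T) := by
      apply ContinuousOn.abs
      exact (hgcont.mono (fun x hx => hx.2)).sub
        (hgcont.comp hφcont.continuousOn (fun x _ => hφT' x))
    have hsub1 : uIcc (0:ℝ) (2*ε₁) ⊆ Icc 0 T := by
      rw [uIcc_of_le (by linarith)]; exact Icc_subset_Icc le_rfl (by linarith)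
    have hsub2 : uIcc (2*ε₁) b ⊆ Icc 0 T := by
      rw [uIcc_of_le h2e1b]; exact Icc_subset_Icc (by linarith) (by linarith)
    have hsub3 : uIcc b T ⊆ Icc 0 T := by
      rw [uIcc_of_le (by linarith)]; exact Icc_subset_Icc (by linarith) le_rfl
    have i1 : IntervalIntegrable (fun t : ℝ => |(1-t)^(-κ) - (1-φ t)^(-κ)|) volume 0 (2*ε₁) :=
      (hcont.mono hsub1).intervalIntegrable
    have i2 : IntervalIntegrable (fun t : ℝ => |(1-t)^(-κ) - (1-φ t)^(-κ)|) volume (2*ε₁) b :=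
      (hcont.mono hsub2).intervalIntegrable
    have i3 : IntervalIntegrable (fun t : ℝ => |(1-t)^(-κ) - (1-φ t)^(-κ)|) volume b T :=
      (hcont.mono hsub3).intervalIntegrable
    have hsplit : (∫ t in (0:ℝ)..T, |(1-t)^(-κ) - (1-φ t)^(-κ)|) =
        (∫ t in (0:ℝ)..(2*ε₁), |(1-t)^(-κ) - (1-φ t)^(-κ)|)
        + (∫ t in (2*ε₁)..b, |(1-t)^(-κ) - (1-φ t)^(-κ)|)
        + (∫ t in b..T, |(1-t)^(-κ) - (1-φ t)^(-κ)|) := by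
      rw [intervalIntegral.integral_add_adjacent_intervals i1 i2,
        intervalIntegral.integral_add_adjacent_intervals (i1.trans i2) i3]
    have hmid0 : (∫ t in (2*ε₁)..b, |(1-t)^(-κ) - (1-φ t)^(-κ)|) = 0 := by
      have heq : EqOn (fun t : ℝ => |(1-t)^(-κ) - (1-φ t)^(-κ)|) (fun _ => (0:ℝ))
          (uIcc (2*ε₁) b) := by
        intro t ht
        rw [uIcc_of_le h2e1b] at ht
        simp only []
        rw [hmid t ht.1 ht.2, sub_self, abs_zero]
      rw [intervalIntegral.integral_congr heq, intervalIntegral.integral_zero]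
    have hCleft : ∀ z ∈ Icc (0:ℝ) (2*ε₁), κ * (1-z)^(-κ-1) ≤ 5 := by
      intro z hz
      have hz2 : (0:ℝ) < 1 - 2*ε₁ := by linarith
      have h1z : (0:ℝ) < 1 - z := by linarith [hz.2]
      have e1 : (1-z)^(-κ-1) ≤ (1-2*ε₁)^(-κ-1) :=
        Real.rpow_le_rpow_of_nonpos hz2 (by linarith [hz.2]) (by linarith)
      have e2 : (1-2*ε₁)^(-κ-1) ≤ (1-2*ε₁)^(-2:ℝ) :=
        Real.rpow_le_rpow_of_exponent_ge hz2 (by linarith) (by linarith)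
      have e3 : (1-2*ε₁)^(-2:ℝ) = ((1-2*ε₁)^2)⁻¹ := by
        rw [Real.rpow_neg hz2.le, Real.rpow_two]
      have e4 : ((1-2*ε₁)^2)⁻¹ ≤ (16/25 : ℝ)⁻¹ := by
        apply inv_anti₀ (by norm_num)
        nlinarith
      have e5 : (1-z)^(-κ-1) ≤ (16/25:ℝ)⁻¹ := e1.trans ((e2.trans_eq e3).trans e4)
      calc κ * (1-z)^(-κ-1) ≤ 1 * (16/25:ℝ)⁻¹ :=
            mul_le_mul hκ1 e5 (Real.rpow_nonneg h1z.le _) zero_le_one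
        _ ≤ 5 := by norm_num
    have hleftbd : (∫ t in (0:ℝ)..(2*ε₁), |(1-t)^(-κ) - (1-φ t)^(-κ)|) ≤ 5*ε₁*(2*ε₁) := by
      have hb' : ∀ x ∈ Set.uIoc (0:ℝ) (2*ε₁), ‖|(1-x)^(-κ) - (1-φ x)^(-κ)|‖ ≤ 5*ε₁ := by
        intro x hx
        rw [uIoc_of_le (by linarith)] at hx
        have hx1 : (0:ℝ) ≤ x := le_of_lt hx.1
        have hxm : x ∈ Icc (0:ℝ) (2*ε₁) := ⟨hx1, hx.2⟩
        have hφm : φ x ∈ Icc (0:ℝ) (2*ε₁) := ⟨hφ0' x, (hleft x hx1 hx.2).2⟩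
        have hmvt := onesub_mvt hκ0.le (show 2*ε₁ < 1 by linarith) hCleft hφm hxm
        rw [Real.norm_eq_abs, abs_abs]
        refine hmvt.trans ?_
        have := (hleft x hx1 hx.2).1
        nlinarith [abs_nonneg (x - φ x)]
      have hn := intervalIntegral.norm_integral_le_of_norm_le_const hb'
      calc (∫ t in (0:ℝ)..(2*ε₁), |(1-t)^(-κ) - (1-φ t)^(-κ)|)
          ≤ ‖∫ t in (0:ℝ)..(2*ε₁), |(1-t)^(-κ) - (1-φ t)^(-κ)|‖ := le_abs_self _
        _ ≤ 5*ε₁ * |2*ε₁ - 0| := hn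
        _ = 5*ε₁*(2*ε₁) := by rw [sub_zero, abs_of_nonneg (by positivity)]
    have hCright : ∀ z ∈ Icc (0:ℝ) T, κ * (1-z)^(-κ-1) ≤ (1-T)^(-κ-1) := by
      intro z hz
      have h1z : (0:ℝ) ≤ 1 - z := by linarith [hz.2]
      calc κ * (1-z)^(-κ-1) ≤ 1 * (1-T)^(-κ-1) :=
            mul_le_mul hκ1 (Real.rpow_le_rpow_of_nonpos hAT (by linarith [hz.2]) (by linarith))
              (Real.rpow_nonneg h1z _) zero_le_one
        _ = (1-T)^(-κ-1) := one_mul _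
    have hC2 : (0:ℝ) ≤ (1-T)^(-κ-1) := Real.rpow_nonneg hAT.le _
    have hrightbd : (∫ t in b..T, |(1-t)^(-κ) - (1-φ t)^(-κ)|)
        ≤ (1-T)^(-κ-1)*ε₂*(2*ε₂) := by
      have hb' : ∀ x ∈ Set.uIoc b T, ‖|(1-x)^(-κ) - (1-φ x)^(-κ)|‖ ≤ (1-T)^(-κ-1)*ε₂ := by
        intro x hx
        rw [uIoc_of_le (by linarith)] at hx
        have hx1 : (0:ℝ) ≤ x := by linarith [hx.1]
        have hxm : x ∈ Icc (0:ℝ) T := ⟨hx1, hx.2⟩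
        have hφm : φ x ∈ Icc (0:ℝ) T := ⟨hφ0' x, hφT' x⟩
        have hmvt := onesub_mvt hκ0.le hT1 hCright hφm hxm
        rw [Real.norm_eq_abs, abs_abs]
        refine hmvt.trans ?_
        have := hright x (le_of_lt hx.1) hx.2
        nlinarith [abs_nonneg (x - φ x)]
      have hn := intervalIntegral.norm_integral_le_of_norm_le_const hb'
      calc (∫ t in b..T, |(1-t)^(-κ) - (1-φ t)^(-κ)|)
          ≤ ‖∫ t in b..T, |(1-t)^(-κ) - (1-φ t)^(-κ)|‖ := le_abs_self _
        _ ≤ (1-T)^(-κ-1)*ε₂ * |T - b| := hn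
        _ = (1-T)^(-κ-1)*ε₂*(2*ε₂) := by
            rw [show T - b = 2*ε₂ by rw [hbdef]; ring, abs_of_nonneg (by positivity)]
    rw [hsplit, hmid0]
    have hC2eq : (1-T)^(-κ-1) = ((1-T)^(κ+1))⁻¹ := by
      rw [show -κ-1 = -(κ+1) by ring, Real.rpow_neg hAT.le]
    have hpowpos : (0:ℝ) < (1-T)^(κ+1) := Real.rpow_pos_of_pos hAT _
    have hinv : (0:ℝ) ≤ ((1-T)^(κ+1))⁻¹ := by positivity
    have final : 5*ε₁*(2*ε₁) + 0 + (1-T)^(-κ-1)*ε₂*(2*ε₂)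
        ≤ 10*ε₁^2 + 10*ε₂^2/(1-T)^(κ+1) := by
      rw [hC2eq, div_eq_mul_inv]
      nlinarith [mul_nonneg (mul_nonneg he2.le he2.le) hinv]
    linarith [hleftbd, hrightbd, final]
  have hφ₁cont : Continuous φ₁ := by
    rw [hφ₁def]; unfold phis; fun_prop
  have hφ₂cont : Continuous φ₂ := by
    rw [hφ₂def]; unfold phit; fun_prop
  have hexp₁ : ∀ t : ℝ, ((1-φ₁ t)^(-α)) ^ (2/(2+α)) = (1-φ₁ t)^(-κ) := by
    intro t
    rw [← Real.rpow_mul (h1φ₁ t).le]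
    congr 1
    rw [hκdef]; ring
  have hexp₂ : ∀ t : ℝ, ((1-φ₂ t)^(-α)) ^ (2/(2+α)) = (1-φ₂ t)^(-κ) := by
    intro t
    rw [← Real.rpow_mul (h1φ₂ t).le]
    congr 1
    rw [hκdef]; ring
  refine ⟨fun t => (1 - φ₁ t) ^ (-α), fun t => (1 - φ₂ t) ^ (-α), {ε₁, 2*ε₁, b, c},
    ?_, ?_, ?_, ?_, ?_, ?_, ?_, ?_, ?_, ?_, ?_, ?_, ?_, ?_, ?_, ?_⟩
  · -- positivity
    exact fun t _ => ⟨Real.rpow_pos_of_pos (h1φ₁ t) _, Real.rpow_pos_of_pos (h1φ₂ t) _⟩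
  · -- monotone qs
    intro x _ y _ hxy
    have h2 : φ₁ x ≤ φ₁ y := phis_mono ε₁ c hxy
    exact Real.rpow_le_rpow_of_nonpos (h1φ₁ y) (by linarith) (by linarith)
  · -- monotone qst
    intro x _ y _ hxy
    have h2 : φ₂ x ≤ φ₂ y := phit_mono ε₁ b T hxy
    exact Real.rpow_le_rpow_of_nonpos (h1φ₂ y) (by linarith) (by linarith)
  · -- lipschitz qs
    refine ⟨(2*(1-T)^(-α-1)).toNNReal * 2, ?_⟩
    have hAT : (0:ℝ) < 1 - T := by linarith
    have hfLip : LipschitzOnWith (2*(1-T)^(-α-1)).toNNReal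
        (fun x : ℝ => (1-x)^(-α)) (Icc 0 T) := by
      apply LipschitzOnWith.of_dist_le_mul
      intro x hx y hy
      rw [Real.dist_eq, Real.dist_eq, Real.coe_toNNReal _
        (mul_nonneg (by norm_num) (Real.rpow_nonneg hAT.le _))]
      refine onesub_mvt hα0.le hT1 (fun z hz => ?_) hy hx
      exact mul_le_mul hα2.le
        (Real.rpow_le_rpow_of_nonpos hAT (by linarith [hz.2]) (by linarith))
        (Real.rpow_nonneg (by linarith [hz.2]) _) (by norm_num)
    have hmap : MapsTo φ₁ (Icc (0:ℝ) T) (Icc (0:ℝ) T) := fun t _ =>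
      mem_Icc.mpr ⟨hφ₁0 t, (hφ₁c t).trans hcT⟩
    have hl2 : LipschitzOnWith 2 φ₁ (Icc (0:ℝ) T) := by
      rw [hφ₁def]; exact (phis_lip ε₁ c).lipschitzOnWith
    exact hfLip.comp hl2 hmap
  · -- lipschitz qst
    refine ⟨(2*(1-T)^(-α-1)).toNNReal * 2, ?_⟩
    have hAT : (0:ℝ) < 1 - T := by linarith
    have hfLip : LipschitzOnWith (2*(1-T)^(-α-1)).toNNReal
        (fun x : ℝ => (1-x)^(-α)) (Icc 0 T) := by
      apply LipschitzOnWith.of_dist_le_mul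
      intro x hx y hy
      rw [Real.dist_eq, Real.dist_eq, Real.coe_toNNReal _
        (mul_nonneg (by norm_num) (Real.rpow_nonneg hAT.le _))]
      refine onesub_mvt hα0.le hT1 (fun z hz => ?_) hy hx
      exact mul_le_mul hα2.le
        (Real.rpow_le_rpow_of_nonpos hAT (by linarith [hz.2]) (by linarith))
        (Real.rpow_nonneg (by linarith [hz.2]) _) (by norm_num)
    have hmap : MapsTo φ₂ (Icc (0:ℝ) T) (Icc (0:ℝ) T) := fun t ht =>
      mem_Icc.mpr ⟨hφ₂0 t, hφ₂T t⟩
    have hl2 : LipschitzOnWith 2 φ₂ (Icc (0:ℝ) T) := by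
      rw [hφ₂def]; exact (phit_lip ε₁ b T).lipschitzOnWith
    exact hfLip.comp hl2 hmap
  · -- differentiable
    intro t ht htF
    simp only [Finset.mem_insert, Finset.mem_singleton, not_or] at htF
    obtain ⟨h1, h2, h3, h4⟩ := htF
    exact ⟨(key₁ t ht.1 ht.2 h1 h2 h4).1, (key₂ t ht.1 ht.2 h1 h3 h4).1⟩
  · -- constant near 0
    intro t ht
    obtain ⟨ht0, hte⟩ := ht
    constructor
    · simp only []; rw [E1 t hte, E1 0 he1.le]
    · simp only []; rw [G1 t hte, G1 0 he1.le]
  · -- constant near T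
    intro t ht
    obtain ⟨htc, htT⟩ := ht
    constructor
    · simp only []; rw [E4 t htc, E4 T hcT]
    · simp only []; rw [G4 t htc, G4 T hcT]
  · -- middle equality
    intro t ht
    obtain ⟨ht1, ht2⟩ := ht
    constructor
    · simp only []; rw [E3 t ht1 (le_trans ht2 hbc)]
    · simp only []; rw [G2 t (by linarith) ht2]
  · -- (iv)
    intro t ht
    exact hord t ht.1 ht.2
  · -- (v)
    intro t ht
    obtain ⟨ht0, hte⟩ := ht
    have htT : t ≤ T := by linarith
    have h1t : 0 < 1 - t := by linarith
    refine ⟨?_, hmidmul t ht0 htT, ?_⟩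
    · simp only []; rw [hratio₁ t htT]
      refine rpow_ratio_lower hα0 hα2.le (m := 1-2*ε₁) (by linarith) ?_ (by linarith)
        (by nlinarith)
      rw [le_div_iff₀ (h1φ₁ t)]
      nlinarith [hφ₁0 t, hφ₁le t ht0]
    · simp only []; rw [hratio₂ t htT]
      refine rpow_ratio_upper hα0 hα2.le (R := 1/(1-ε₁))
        (div_pos h1t (h1φ₂ t)) ?_ ?_ ?_
      · rw [div_le_div_iff₀ (h1φ₂ t) (by linarith)]
        rcases le_total t ε₁ with h | h
        · rw [G1 t h]; nlinarith
        · rw [G2 t h (by linarith)]; nlinarith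
      · rw [le_div_iff₀ (by linarith : (0:ℝ) < 1-ε₁)]; linarith
      · rw [div_pow, one_pow, div_le_iff₀ (by nlinarith)]
        nlinarith [mul_lt_mul_of_pos_left he1lt he1,
          mul_nonneg (mul_nonneg he1.le he1.le) he1.le]
  · -- (vi)
    intro t ht
    obtain ⟨htb, htT⟩ := ht
    have ht0 : 0 ≤ t := by linarith
    have h1t : 0 < 1 - t := by linarith
    have hA : 0 < 1 - T := by linarith
    refine ⟨?_, hmidmul t ht0 htT, ?_⟩
    · simp only []; rw [hratio₁ t htT]
      have hrw : 1 - 2*ε₂/(1-T) = ((1-T)-2*ε₂)/(1-T) := by field_simp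
      rw [hrw]
      refine rpow_ratio_lower hα0 hα2.le (m := (1-T)/((1-T)+ε₂))
        (div_pos hA (by linarith)) ?_ ?_ ?_
      · rw [div_le_div_iff₀ (by linarith) (h1φ₁ t)]
        have hd := D2 t htb htT
        have hd0 : 0 ≤ t - φ₁ t := by have := hφ₁le t ht0; linarith
        nlinarith
      · rw [div_le_one (by linarith)]; linarith
      · rw [div_pow, div_le_div_iff₀ hA (by positivity)]
        nlinarith [sq_nonneg ε₂, mul_nonneg he2.le (mul_nonneg he2.le he2.le)]
    · simp only []; rw [hratio₂ t htT]
      have hd9 : 9*ε₂ ≤ (1-T) - ε₂ := by linarith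
      have hden : 0 < (1-T) - ε₂ := by linarith
      have hrw : 1 + 5*ε₂/(1-T) = ((1-T)+5*ε₂)/(1-T) := by field_simp
      rw [hrw]
      refine rpow_ratio_upper hα0 hα2.le (R := (1-T)/((1-T)-ε₂))
        (div_pos h1t (h1φ₂ t)) ?_ ?_ ?_
      · rw [div_le_div_iff₀ (h1φ₂ t) hden]
        have hd := D2' t htb htT
        have hd0 : 0 ≤ φ₂ t - t := by have := hφ₂ge t htT; linarith
        nlinarith
      · rw [le_div_iff₀ hden]; linarith
      · rw [div_pow, div_le_div_iff₀ (by positivity) hA]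
        nlinarith [mul_nonneg (mul_nonneg he2.le he2.le) he2.le,
          mul_nonneg (sub_nonneg.mpr h10e2') (mul_nonneg he2.le he2.le),
          mul_nonneg (mul_nonneg (sub_nonneg.mpr h10e2') he2.le) hA.le]
  · -- (vii)
    intro t ht
    obtain ⟨ht0, htT⟩ := ht
    have h1t : 0 < 1 - t := by linarith
    refine ⟨?_, hmidmul t ht0 htT, ?_⟩
    · simp only []; rw [hratio₁ t htT]
      have hCs := Cs t ht0 htT
      refine rpow_ratio_lower hα0 hα2.le (m := 8/9) (by norm_num) ?_ (by norm_num)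
        (by norm_num)
      rw [le_div_iff₀ (h1φ₁ t)]; linarith
    · simp only []; rw [hratio₂ t htT]
      have hCt := Ct t ht0 htT
      refine rpow_ratio_upper hα0 hα2.le (R := 8/7) (div_pos h1t (h1φ₂ t)) ?_
        (by norm_num) (by norm_num)
      rw [div_le_iff₀ (h1φ₂ t)]; linarith
  · -- (viii)
    intro t ht htF
    simp only [Finset.mem_insert, Finset.mem_singleton, not_or] at htF
    obtain ⟨h1, h2, h3, h4⟩ := htF
    constructor
    · have := (key₁ t ht.1 ht.2 h1 h2 h4).2
      simp only []
      calc deriv (fun s => (1 - φ₁ s)^(-α)) t ≤ 8/(1-t) * (1 - φ₁ t)^(-α) := this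
        _ = (8/(1-t)) * (1 - φ₁ t)^(-α) := rfl
    · have := (key₂ t ht.1 ht.2 h1 h3 h4).2
      simp only []
      calc deriv (fun s => (1 - φ₂ s)^(-α)) t ≤ 8/(1-t) * (1 - φ₂ t)^(-α) := this
        _ = (8/(1-t)) * (1 - φ₂ t)^(-α) := rfl
  · -- (ix) for qs
    simp only [hexp₁]
    refine intbound φ₁ hφ₁cont hφ₁0 (fun t => (hφ₁c t).trans hcT)
      (fun t h1 h2 => E3 t h1 (h2.trans hbc)) ?_ ?_
    · intro t h1 h2
      have hle := hφ₁le t h1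
      refine ⟨?_, hle.trans h2⟩
      rw [abs_of_nonneg (by linarith)]
      exact D1 t h1 h2
    · intro t h1 h2
      have hle := hφ₁le t (by linarith)
      rw [abs_of_nonneg (by linarith)]
      exact D2 t h1 h2
  · -- (ix) for qst
    simp only [hexp₂]
    refine intbound φ₂ hφ₂cont hφ₂0 hφ₂T
      (fun t h1 h2 => G2 t (by linarith) h2) ?_ ?_
    · intro t h1 h2
      have hge := hφ₂ge t (by linarith)
      obtain ⟨hd1, hd2⟩ := D1' t h1 h2
      refine ⟨?_, hd2⟩
      rw [abs_sub_comm, abs_of_nonneg (by linarith)]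
      exact hd1
    · intro t h1 h2
      have hge := hφ₂ge t h2
      rw [abs_sub_comm, abs_of_nonneg (by linarith)]
      exact D2' t h1 h2
end

section
/- For every κ ∈ (0,1) and all a₁, a₂, a₃, a₄ > 0, there exist C, c > 0 such that for all u ≥ 1 and all v ≥ 0: ∑_{n=1}^∞ n^{a₄} · min(1, exp(−a₁(v − a₂·n))) · exp(−a₃·u·n^κ) ≤ C·e^{−c·u}·(e^{−c·v} + e^{−c·u·v^κ}). -/
open Real Filter

/-- `x ^ p * exp(-(b * x ^ κ))` is bounded on `[1, ∞)` when `b, κ > 0`. -/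
lemma aux_rpow_exp_bounded (κ p b : ℝ) (hκ : 0 < κ) (hb : 0 < b) :
    ∃ M : ℝ, 0 < M ∧ ∀ x : ℝ, 1 ≤ x → x ^ p * Real.exp (-(b * x ^ κ)) ≤ M := by
  set f : ℝ → ℝ := fun x => x ^ p * Real.exp (-(b * x ^ κ)) with hf
  have htends : Tendsto f atTop (nhds 0) := by
    have h1 : Tendsto (fun x : ℝ => x ^ κ) atTop atTop := tendsto_rpow_atTop hκ
    have h2 := tendsto_rpow_mul_exp_neg_mul_atTop_nhds_zero (p / κ) b hb
    have h3 : Tendsto (fun x : ℝ => (x ^ κ) ^ (p / κ) * Real.exp (-b * x ^ κ))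
        atTop (nhds 0) := h2.comp h1
    refine h3.congr' ?_
    filter_upwards [eventually_ge_atTop (1:ℝ)] with x hx
    have hx0 : (0:ℝ) ≤ x := le_trans zero_le_one hx
    rw [← Real.rpow_mul hx0]
    have : κ * (p / κ) = p := by field_simp
    rw [this]
    ring_nf
    rfl
  have hev : ∀ᶠ x in atTop, f x < 1 := htends.eventually (gt_mem_nhds one_pos)
  obtain ⟨A, hA⟩ := eventually_atTop.1 hev
  set B := max 1 A with hB
  have hcont : ContinuousOn f (Set.Icc 1 B) := by
    intro x hx
    have hx0 : x ≠ 0 := by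
      have := hx.1; intro h; rw [h] at this; linarith
    exact ((Real.continuousAt_rpow_const x p (Or.inl hx0)).mul
      (((Real.continuousAt_rpow_const x κ (Or.inl hx0)).const_mul b).neg.rexp)).continuousWithinAt
  have hne : (Set.Icc (1:ℝ) B).Nonempty := ⟨1, by simp [hB, le_max_left]⟩
  obtain ⟨x0, _, hx0max⟩ := isCompact_Icc.exists_isMaxOn hne hcont
  refine ⟨max 1 (f x0), lt_max_of_lt_left one_pos, fun x hx => ?_⟩
  rcases le_or_gt x B with h | h
  · exact le_max_of_le_right (hx0max ⟨hx, h⟩)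
  · exact le_max_of_le_left (hA x (le_trans (le_max_right 1 A) h.le)).le

/-- Summability of `(n+1)^p * exp(-(b * (n+1)^κ))`. -/
lemma aux_summable (κ p b : ℝ) (hκ : 0 < κ) (hb : 0 < b) :
    Summable (fun n : ℕ => ((n : ℝ) + 1) ^ p * Real.exp (-(b * ((n : ℝ) + 1) ^ κ))) := by
  obtain ⟨M, hM, hMle⟩ := aux_rpow_exp_bounded κ (p + 2) b hκ hb
  have hsum : Summable (fun n : ℕ => M * ((n : ℝ) + 1) ^ (-2 : ℝ)) := by
    apply Summable.mul_left
    have : Summable (fun n : ℕ => ((n : ℝ)) ^ (-2 : ℝ)) :=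
      Real.summable_nat_rpow.2 (by norm_num)
    have := (summable_nat_add_iff 1).2 this
    refine this.congr fun n => ?_
    push_cast
    ring_nf
  refine Summable.of_nonneg_of_le (fun n => by positivity) (fun n => ?_) hsum
  have hN : (1:ℝ) ≤ (n : ℝ) + 1 := by
    have : (0:ℝ) ≤ (n:ℝ) := Nat.cast_nonneg n
    linarith
  have hN0 : (0:ℝ) < (n : ℝ) + 1 := by positivity
  have key := hMle ((n : ℝ) + 1) hN
  have hsplit : ((n : ℝ) + 1) ^ p
      = ((n : ℝ) + 1) ^ (-2 : ℝ) * ((n : ℝ) + 1) ^ (p + 2) := by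
    rw [← Real.rpow_add hN0]; ring_nf
  rw [hsplit]
  have h2 : (0:ℝ) ≤ ((n : ℝ) + 1) ^ (-2 : ℝ) := by positivity
  calc ((n : ℝ) + 1) ^ (-2 : ℝ) * ((n : ℝ) + 1) ^ (p + 2)
        * Real.exp (-(b * ((n : ℝ) + 1) ^ κ))
      = ((n : ℝ) + 1) ^ (-2 : ℝ) *
        (((n : ℝ) + 1) ^ (p + 2) * Real.exp (-(b * ((n : ℝ) + 1) ^ κ))) := by ring
    _ ≤ ((n : ℝ) + 1) ^ (-2 : ℝ) * M := by
        exact mul_le_mul_of_nonneg_left key h2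
    _ = M * ((n : ℝ) + 1) ^ (-2 : ℝ) := by ring

set_option maxHeartbeats 1000000 in
/-- Technical bound on a series: for `κ ∈ (0,1)` and `a₁, a₂, a₃, a₄ > 0` there exist
`C, c > 0` such that for all `u ≥ 1` and `v ≥ 0`,
`∑_{n ≥ 1} n^{a₄} min(1, e^{-a₁(v - a₂ n)}) e^{-a₃ u n^κ}
  ≤ C e^{-c u} (e^{-c v} + e^{-c u v^κ})`. -/
theorem technical_series_bound (κ : ℝ) (hκ : κ ∈ Set.Ioo (0:ℝ) 1)
    (a₁ a₂ a₃ a₄ : ℝ) (h1 : 0 < a₁) (h2 : 0 < a₂) (h3 : 0 < a₃) (h4 : 0 < a₄) :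
    ∃ C c : ℝ, 0 < C ∧ 0 < c ∧ ∀ u v : ℝ, 1 ≤ u → 0 ≤ v →
      (∑' n : ℕ, ((n : ℝ) + 1) ^ a₄ *
          min 1 (Real.exp (-(a₁ * (v - a₂ * ((n : ℝ) + 1))))) *
          Real.exp (-(a₃ * u * ((n : ℝ) + 1) ^ κ)))
        ≤ C * Real.exp (-c * u) *
          (Real.exp (-c * v) + Real.exp (-c * u * v ^ κ)) := by
  obtain ⟨hκ0, hκ1⟩ := hκ
  set D : ℝ := (2 * a₂) ^ κ with hD
  have hDpos : 0 < D := Real.rpow_pos_of_pos (by linarith) κ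
  set c : ℝ := min (a₁ / 2) (min ((a₃ / 2) / D) (a₃ / 4)) with hc
  have hcpos : 0 < c := by
    apply lt_min (by linarith)
    exact lt_min (by positivity) (by linarith)
  have hc1 : c ≤ a₁ / 2 := min_le_left _ _
  have hc2 : c ≤ (a₃ / 2) / D := le_trans (min_le_right _ _) (min_le_left _ _)
  have hc3 : c ≤ a₃ / 4 := le_trans (min_le_right _ _) (min_le_right _ _)
  -- the comparison series
  have hg : Summable (fun n : ℕ => ((n : ℝ) + 1) ^ a₄ *
      Real.exp (-(a₃ / 4 * ((n : ℝ) + 1) ^ κ))) := aux_summable κ a₄ (a₃ / 4) hκ0 (by linarith)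
  set Sg : ℝ := ∑' n : ℕ, ((n : ℝ) + 1) ^ a₄ * Real.exp (-(a₃ / 4 * ((n : ℝ) + 1) ^ κ))
    with hSgdef
  have hSg0 : 0 ≤ Sg := tsum_nonneg (fun n => by positivity)
  refine ⟨1 + Sg, c, by linarith, hcpos, fun u v hu hv => ?_⟩
  have hu0 : (0:ℝ) < u := lt_of_lt_of_le one_pos hu
  set E : ℝ := Real.exp (-c * v) + Real.exp (-c * u * v ^ κ) with hE
  have hEpos : 0 < E := by positivity
  -- key per-term bound
  have key : ∀ n : ℕ, ((n : ℝ) + 1) ^ a₄ *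
      min 1 (Real.exp (-(a₁ * (v - a₂ * ((n : ℝ) + 1))))) *
      Real.exp (-(a₃ * u * ((n : ℝ) + 1) ^ κ))
      ≤ (E * Real.exp (-(a₃ / 4 * u))) *
        (((n : ℝ) + 1) ^ a₄ * Real.exp (-(a₃ / 4 * ((n : ℝ) + 1) ^ κ))) := by
    intro n
    set N : ℝ := (n : ℝ) + 1 with hNdef
    have hN1 : (1:ℝ) ≤ N := by
      have : (0:ℝ) ≤ (n:ℝ) := Nat.cast_nonneg n
      simp only [hNdef]; linarith
    have hN0 : (0:ℝ) < N := lt_of_lt_of_le one_pos hN1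
    have hNκ : (1:ℝ) ≤ N ^ κ := Real.one_le_rpow hN1 hκ0.le
    have hNκ0 : (0:ℝ) ≤ N ^ κ := by positivity
    -- split exponential
    have hsplit : Real.exp (-(a₃ * u * N ^ κ))
        = Real.exp (-(a₃ / 2 * u * N ^ κ)) *
          (Real.exp (-(a₃ / 4 * u * N ^ κ)) * Real.exp (-(a₃ / 4 * u * N ^ κ))) := by
      rw [← Real.exp_add, ← Real.exp_add]; ring_nf
    -- bound min * first factor by E
    have hmin : min 1 (Real.exp (-(a₁ * (v - a₂ * N)))) *
        Real.exp (-(a₃ / 2 * u * N ^ κ)) ≤ E := by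
      rcases le_total v (2 * a₂ * N) with hcase | hcase
      · -- v ≤ 2a₂N : use the exp(-cuv^κ) term
        have hvκ : v ^ κ ≤ D * N ^ κ := by
          calc v ^ κ ≤ (2 * a₂ * N) ^ κ := Real.rpow_le_rpow hv hcase hκ0.le
            _ = D * N ^ κ := Real.mul_rpow (by linarith) hN0.le
        have hexp : a₃ / 2 * u * N ^ κ ≥ c * u * v ^ κ := by
          have h5 : c * u * v ^ κ ≤ c * u * (D * N ^ κ) := by
            apply mul_le_mul_of_nonneg_left hvκ (by positivity)
          have h6 : c * (D * N ^ κ) ≤ (a₃ / 2 / D) * (D * N ^ κ) := by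
            apply mul_le_mul_of_nonneg_right hc2 (by positivity)
          have h8 : (a₃ / 2 / D) * (D * N ^ κ) = a₃ / 2 * N ^ κ := by
            field_simp
          calc c * u * v ^ κ ≤ c * u * (D * N ^ κ) := h5
            _ = (c * (D * N ^ κ)) * u := by ring
            _ ≤ (a₃ / 2 * N ^ κ) * u := by
                rw [← h8]; exact mul_le_mul_of_nonneg_right h6 hu0.le
            _ = a₃ / 2 * u * N ^ κ := by ring
        calc min 1 (Real.exp (-(a₁ * (v - a₂ * N)))) * Real.exp (-(a₃ / 2 * u * N ^ κ))
            ≤ 1 * Real.exp (-(c * u * v ^ κ)) := by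
              apply mul_le_mul (min_le_left _ _) (Real.exp_le_exp.2 (by linarith))
                (Real.exp_pos _).le zero_le_one
          _ = Real.exp (-c * u * v ^ κ) := by rw [one_mul]; ring_nf
          _ ≤ E := le_add_of_nonneg_left (Real.exp_pos _).le
      · -- 2a₂N ≤ v : use the exp(-cv) term
        have hminle : min 1 (Real.exp (-(a₁ * (v - a₂ * N)))) ≤ Real.exp (-c * v) := by
          apply le_trans (min_le_right _ _)
          apply Real.exp_le_exp.2
          nlinarith [mul_le_mul_of_nonneg_right hc1 hv]
        calc min 1 (Real.exp (-(a₁ * (v - a₂ * N)))) * Real.exp (-(a₃ / 2 * u * N ^ κ))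
            ≤ Real.exp (-c * v) * 1 := by
              apply mul_le_mul hminle (Real.exp_le_one_iff.2 (neg_nonpos.2 (by positivity)))
                (Real.exp_pos _).le (Real.exp_pos _).le
          _ = Real.exp (-c * v) := mul_one _
          _ ≤ E := le_add_of_nonneg_right (Real.exp_pos _).le
    have hB : Real.exp (-(a₃ / 4 * u * N ^ κ)) ≤ Real.exp (-(a₃ / 4 * u)) := by
      apply Real.exp_le_exp.2
      nlinarith [mul_le_mul_of_nonneg_left hNκ hu0.le]
    have hC : Real.exp (-(a₃ / 4 * u * N ^ κ)) ≤ Real.exp (-(a₃ / 4 * N ^ κ)) := by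
      apply Real.exp_le_exp.2
      nlinarith [mul_le_mul_of_nonneg_right hu hNκ0]
    calc N ^ a₄ * min 1 (Real.exp (-(a₁ * (v - a₂ * N)))) * Real.exp (-(a₃ * u * N ^ κ))
        = N ^ a₄ * ((min 1 (Real.exp (-(a₁ * (v - a₂ * N)))) *
            Real.exp (-(a₃ / 2 * u * N ^ κ))) *
            (Real.exp (-(a₃ / 4 * u * N ^ κ)) * Real.exp (-(a₃ / 4 * u * N ^ κ)))) := by
          rw [hsplit]; ring
      _ ≤ N ^ a₄ * (E * (Real.exp (-(a₃ / 4 * u)) * Real.exp (-(a₃ / 4 * N ^ κ)))) := by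
          apply mul_le_mul_of_nonneg_left _ (by positivity)
          apply mul_le_mul hmin (mul_le_mul hB hC (Real.exp_pos _).le (Real.exp_pos _).le)
            (by positivity) hEpos.le
      _ = (E * Real.exp (-(a₃ / 4 * u))) * (N ^ a₄ * Real.exp (-(a₃ / 4 * N ^ κ))) := by
          ring
  -- sum up
  have hm : Summable (fun n : ℕ => (E * Real.exp (-(a₃ / 4 * u))) *
      (((n : ℝ) + 1) ^ a₄ * Real.exp (-(a₃ / 4 * ((n : ℝ) + 1) ^ κ)))) := hg.mul_left _
  have ht : Summable (fun n : ℕ => ((n : ℝ) + 1) ^ a₄ *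
      min 1 (Real.exp (-(a₁ * (v - a₂ * ((n : ℝ) + 1))))) *
      Real.exp (-(a₃ * u * ((n : ℝ) + 1) ^ κ))) := by
    apply Summable.of_nonneg_of_le _ key hm
    intro n
    have : (0:ℝ) ≤ min 1 (Real.exp (-(a₁ * (v - a₂ * ((n : ℝ) + 1))))) :=
      le_min zero_le_one (Real.exp_pos _).le
    positivity
  calc (∑' n : ℕ, ((n : ℝ) + 1) ^ a₄ *
          min 1 (Real.exp (-(a₁ * (v - a₂ * ((n : ℝ) + 1))))) *
          Real.exp (-(a₃ * u * ((n : ℝ) + 1) ^ κ)))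
      ≤ ∑' n : ℕ, (E * Real.exp (-(a₃ / 4 * u))) *
          (((n : ℝ) + 1) ^ a₄ * Real.exp (-(a₃ / 4 * ((n : ℝ) + 1) ^ κ))) :=
        Summable.tsum_le_tsum key ht hm
    _ = (E * Real.exp (-(a₃ / 4 * u))) * Sg := tsum_mul_left
    _ ≤ (E * Real.exp (-c * u)) * (1 + Sg) := by
        apply mul_le_mul _ (by linarith) hSg0 (by positivity)
        apply mul_le_mul_of_nonneg_left _ hEpos.le
        apply Real.exp_le_exp.2
        nlinarith [mul_le_mul_of_nonneg_right hc3 hu0.le]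
    _ = (1 + Sg) * Real.exp (-c * u) * E := by ring
end

section
/- There exist σ > 0, L > 0 and η ∈ (0, 1/2] such that for all 0 ≤ s₀ ≤ t and all continuous functions X, Y : [0,t] → ℝ satisfying X(s) ≤ √2·s and |Y(s)| < σ·s for every s ∈ [s₀, t], one has ∫₀^t b(θ(X(s), Y(s))) ds ≤ t − β ∫_{s₀}^t |Y(s)/(√2·s)|^α · (1 − min(L·(|Y(s)/s|^{2−α} + 1/s), η)) ds. -/
open MeasureTheory

noncomputable def angle (x y : ℝ) : ℝ := Complex.arg ((x : ℂ) + (y : ℂ) * Complex.I)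

private lemma aux_sq (r x y s ρ : ℝ) (h1 : r^2*x^2 ≤ r^2*(2*s^2)) (h2 : r^2*(2*s^2) = y^2)
    (h3 : ρ^2 = x^2+y^2) : (r*ρ)^2 ≤ y^2*(1+r^2) := by nlinarith [sq_nonneg (r*y)]

private lemma aux_final {β K A B C D m : ℝ} (hβ : 0 < β) (hK : 0 < K)
    (hkey : (β+K)*D ≤ β*A*m) (hlα : A*(1-D) ≤ B) (hl2 : C ≤ D)
    (hA1 : A ≤ 1) (hD0 : 0 ≤ D) : β*(A*(1-m)) ≤ β*B - K*C := by
  nlinarith [mul_le_mul_of_nonneg_left hlα hβ.le, mul_le_mul_of_nonneg_left hl2 hK.le,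
    mul_le_mul_of_nonneg_right hA1 hD0]

private lemma g_mono {α β K σ' : ℝ} (hα0 : 0 < α) (hα2 : α < 2) (hK : 0 < K)
    (hσ' : K * σ' ^ (2 - α) ≤ α * β / 2) :
    MonotoneOn (fun u : ℝ => β * u ^ α - K * u ^ 2) (Set.Icc 0 σ') := by
  have hcont : Continuous fun u : ℝ => β * u ^ α - K * u ^ 2 :=
    (continuous_const.mul (Real.continuous_rpow_const hα0.le)).sub
      (continuous_const.mul (continuous_pow 2))
  apply monotoneOn_of_deriv_nonneg (convex_Icc 0 σ') hcont.continuousOn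
  · intro x hx
    rw [interior_Icc] at hx
    exact (((Real.hasDerivAt_rpow_const (Or.inl hx.1.ne')).const_mul β).sub
      ((hasDerivAt_pow 2 x).const_mul K)).differentiableAt.differentiableWithinAt
  · intro x hx
    rw [interior_Icc] at hx
    have hd : HasDerivAt (fun u : ℝ => β * u ^ α - K * u ^ 2)
        (β * (α * x ^ (α - 1)) - K * ((2 : ℕ) * x ^ (2 - 1))) x :=
      ((Real.hasDerivAt_rpow_const (Or.inl hx.1.ne')).const_mul β).sub
        ((hasDerivAt_pow 2 x).const_mul K)
    rw [hd.deriv]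
    have hx2α : x ^ (2 - α) ≤ σ' ^ (2 - α) :=
      Real.rpow_le_rpow hx.1.le hx.2.le (by linarith)
    have h1 : K * x ^ (2 - α) ≤ α * β / 2 :=
      le_trans (mul_le_mul_of_nonneg_left hx2α hK.le) hσ'
    have hxx : x ^ (2 - α) * x ^ (α - 1) = x := by
      rw [← Real.rpow_add hx.1]
      norm_num
    have hxα1 : (0 : ℝ) < x ^ (α - 1) := Real.rpow_pos_of_pos hx.1 _
    have h2 : K * x ≤ α * β / 2 * x ^ (α - 1) := by
      have h3 := mul_le_mul_of_nonneg_right h1 hxα1.le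
      rwa [mul_assoc, hxx] at h3
    norm_num
    nlinarith [h2]

set_option maxHeartbeats 1000000 in
private lemma key_bound
    (α β K σ₀ σ' σ c : ℝ) (b : ℝ → ℝ)
    (hα1 : 2/3 < α) (hα2 : α < 2) (hβ : 0 < β) (hK : 0 < K)
    (hb1 : ∀ θ : ℝ, b θ ≤ 1)
    (hA2 : ∀ θ : ℝ, |θ| ≤ σ₀ → |b θ - (1 - β * |θ| ^ α)| ≤ K * θ ^ 2)
    (hc : ∀ θ ∈ Set.Icc (-Real.pi) Real.pi, σ' ≤ |θ| → b θ ≤ c)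
    (hσ'0 : 0 < σ') (hσ'1 : σ' ≤ σ₀) (hσ'2 : σ' ≤ Real.pi / 3)
    (hσ'3 : K * σ' ^ (2 - α) ≤ α * β / 2)
    (hσpos : 0 < σ) (hσ1 : σ ≤ 1)
    (hσ2 : (β + K) / β * σ ^ (2 - α) ≤ 1 / 2)
    (hσ3 : β * σ ^ α ≤ 1 - c)
    (s x y : ℝ) (hs : 0 < s) (hx : x ≤ Real.sqrt 2 * s) (hy : |y| < σ * s) :
    b (angle x y) ≤ 1 - β * (|y / (Real.sqrt 2 * s)| ^ α *
      (1 - min ((β + K) / β * (|y / s| ^ (2 - α) + 1 / s)) (1 / 2))) := by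
  have hα0 : 0 < α := by linarith
  have h2α : 0 < 2 - α := by linarith
  have hs2 : 0 < Real.sqrt 2 * s := by positivity
  have hsqrt2 : (1:ℝ) ≤ Real.sqrt 2 := by
    have h := Real.sqrt_le_sqrt (by norm_num : (1:ℝ) ≤ 2)
    rwa [Real.sqrt_one] at h
  obtain ⟨θ, hθ⟩ : ∃ θ, θ = angle x y := ⟨_, rfl⟩
  obtain ⟨r, hr⟩ : ∃ r, r = |y| / (Real.sqrt 2 * s) := ⟨_, rfl⟩
  obtain ⟨q, hq⟩ : ∃ q, q = (|y| / s) ^ (2 - α) := ⟨_, rfl⟩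
  obtain ⟨m, hm⟩ : ∃ m, m = min ((β + K) / β * (q + 1 / s)) (1/2 : ℝ) := ⟨_, rfl⟩
  have hry : |y / (Real.sqrt 2 * s)| = r := by rw [hr, abs_div, abs_of_pos hs2]
  have hysr : |y / s| = |y| / s := by rw [abs_div, abs_of_pos hs]
  have hgoal : 1 - β * (|y / (Real.sqrt 2 * s)| ^ α *
      (1 - min ((β + K) / β * (|y / s| ^ (2 - α) + 1 / s)) (1 / 2)))
      = 1 - β * (r ^ α * (1 - m)) := by
    rw [hry, hysr, ← hq, ← hm]
  rw [← hθ, hgoal]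
  have hr0 : 0 ≤ r := by rw [hr]; positivity
  have hrys : r ≤ |y| / s := by
    rw [hr]
    exact div_le_div_of_nonneg_left (abs_nonneg y) hs (le_mul_of_one_le_left hs.le hsqrt2)
  have hys : |y| / s < σ := (div_lt_iff₀ hs).2 hy
  have hrσ : r < σ := lt_of_le_of_lt hrys hys
  have hr1 : r ≤ 1 := by linarith
  have hq0 : 0 ≤ q := by rw [hq]; positivity
  have hLpos : 0 < (β + K) / β := by positivity
  have hm0 : 0 ≤ m := by
    rw [hm]
    exact le_min (mul_nonneg hLpos.le (add_nonneg hq0 (by positivity))) (by norm_num)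
  have hm1 : m ≤ 1/2 := hm.le.trans (min_le_right _ _)
  have hrα : (0:ℝ) ≤ r ^ α := Real.rpow_nonneg hr0 α
  have hrασ : r ^ α ≤ σ ^ α := Real.rpow_le_rpow hr0 hrσ.le hα0.le
  have hθpi : θ ∈ Set.Icc (-Real.pi) Real.pi := by
    rw [hθ]
    exact ⟨(Complex.neg_pi_lt_arg _).le, Complex.arg_le_pi _⟩
  by_cases hcase : σ' ≤ |θ|
  · have h1 : b θ ≤ c := hc θ hθpi hcase
    have h2 : β * (r ^ α * (1 - m)) ≤ β * σ ^ α := by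
      apply mul_le_mul_of_nonneg_left _ hβ.le
      calc r ^ α * (1 - m) ≤ r ^ α * 1 :=
            mul_le_mul_of_nonneg_left (by linarith) hrα
        _ ≤ σ ^ α := by rw [mul_one]; exact hrασ
    linarith
  · push_neg at hcase
    by_cases hy0 : y = 0
    · have hr00 : r = 0 := by rw [hr, hy0]; simp
      rw [hr00, Real.zero_rpow hα0.ne']
      have := hb1 θ
      linarith
    · have hre : ((x:ℂ) + (y:ℂ) * Complex.I).re = x := by simp
      have him : ((x:ℂ) + (y:ℂ) * Complex.I).im = y := by simp
      have hzne : ((x:ℂ) + (y:ℂ) * Complex.I) ≠ 0 := fun h =>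
        hy0 (by rw [← him, h, Complex.zero_im])
      obtain ⟨ρ, hρ⟩ : ∃ ρ, ρ = ‖((x:ℂ) + (y:ℂ) * Complex.I)‖ := ⟨_, rfl⟩
      have hρ0 : 0 < ρ := by rw [hρ]; exact norm_pos_iff.mpr hzne
      have hρ2 : ρ ^ 2 = x ^ 2 + y ^ 2 := by
        rw [hρ, Complex.sq_norm, Complex.normSq_apply, hre, him]; ring
      have hsin : Real.sin θ = y / ρ := by
        rw [hθ, angle, Complex.sin_arg, him, hρ]
      have hcos : Real.cos θ = x / ρ := by
        rw [hθ, angle, Complex.cos_arg hzne, hre, hρ]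
      have hπ2 : |θ| < Real.pi / 2 :=
        lt_of_lt_of_le hcase (by linarith [Real.pi_pos])
      have hcosθ : 0 < Real.cos θ :=
        Real.cos_pos_of_mem_Ioo ⟨(abs_lt.1 hπ2).1, (abs_lt.1 hπ2).2⟩
      have hxpos : 0 < x := by
        have h := mul_pos hcosθ hρ0
        rwa [hcos, div_mul_cancel₀ x hρ0.ne'] at h
      have hsq2 : (Real.sqrt 2 * s) ^ 2 = 2 * s ^ 2 := by
        rw [mul_pow, Real.sq_sqrt (by norm_num : (0:ℝ) ≤ 2)]
      have hx2 : x ^ 2 ≤ 2 * s ^ 2 := by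
        rw [← hsq2]
        exact pow_le_pow_left₀ hxpos.le hx 2
      have hrpos : 0 < r := by rw [hr]; positivity
      obtain ⟨l, hl⟩ : ∃ l, l = r / Real.sqrt (1 + r ^ 2) := ⟨_, rfl⟩
      have hX1 : (1:ℝ) ≤ 1 + r ^ 2 := le_add_of_nonneg_right (sq_nonneg r)
      have hsq1 : (1:ℝ) ≤ Real.sqrt (1 + r ^ 2) := by
        have h := Real.sqrt_le_sqrt hX1
        rwa [Real.sqrt_one] at h
      have hsqpos : 0 < Real.sqrt (1 + r ^ 2) := by linarith
      have hl0 : 0 ≤ l := by rw [hl]; positivity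
      have hlr : l ≤ r := by rw [hl]; exact div_le_self hr0 hsq1
      have hr2 : r ^ 2 * (2 * s ^ 2) = y ^ 2 := by
        rw [hr, div_pow, sq_abs, hsq2,
          div_mul_cancel₀ _ (by positivity : (2 * s ^ 2) ≠ 0)]
      have hρy : (r * ρ) ^ 2 ≤ y ^ 2 * (1 + r ^ 2) :=
        aux_sq r x y s ρ (mul_le_mul_of_nonneg_left hx2 (sq_nonneg r)) hr2 hρ2
      have hlsin : l ≤ |y| / ρ := by
        rw [hl, div_le_div_iff₀ hsqpos hρ0]
        have h1 : r * ρ = Real.sqrt ((r * ρ) ^ 2) := (Real.sqrt_sq (by positivity)).symm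
        have h2 : |y| * Real.sqrt (1 + r ^ 2) = Real.sqrt (y ^ 2 * (1 + r ^ 2)) := by
          rw [Real.sqrt_mul (sq_nonneg y), Real.sqrt_sq_eq_abs]
        rw [h1, h2]
        exact Real.sqrt_le_sqrt hρy
      have hsinθ : |Real.sin θ| = |y| / ρ := by
        rw [hsin, abs_div, abs_of_pos hρ0]
      have hlθ : l ≤ |θ| :=
        le_trans (hlsin.trans_eq hsinθ.symm) Real.abs_sin_le_abs
      have hθσ₀ : |θ| ≤ σ₀ := le_trans hcase.le hσ'1
      have hbθ : b θ ≤ 1 - β * |θ| ^ α + K * θ ^ 2 := by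
        have h := abs_le.1 (hA2 θ hθσ₀)
        linarith [h.1, h.2]
      have hgl : β * l ^ α - K * l ^ 2 ≤ β * |θ| ^ α - K * |θ| ^ 2 :=
        g_mono hα0 hα2 hK hσ'3 ⟨hl0, le_trans hlθ hcase.le⟩ ⟨abs_nonneg θ, hcase.le⟩ hlθ
      rw [sq_abs] at hgl
      have hlα : r ^ α * (1 - r ^ 2) ≤ l ^ α := by
        have h2 : Real.sqrt (1 + r ^ 2) ^ α ≤ 1 + r ^ 2 := by
          have h3 := Real.rpow_le_rpow_of_exponent_le hsq1 (le_of_lt hα2)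
          rwa [show ((2:ℝ)) = ((2:ℕ):ℝ) by norm_num, Real.rpow_natCast,
            Real.sq_sqrt (by positivity : (0:ℝ) ≤ 1 + r ^ 2)] at h3
        have h3 : 0 < Real.sqrt (1 + r ^ 2) ^ α := Real.rpow_pos_of_pos hsqpos α
        have h4 : r ^ α / (1 + r ^ 2) ≤ r ^ α / Real.sqrt (1 + r ^ 2) ^ α :=
          div_le_div_of_nonneg_left hrα h3 h2
        have h5 : r ^ α * (1 - r ^ 2) ≤ r ^ α / (1 + r ^ 2) := by
          rw [le_div_iff₀ (by positivity : (0:ℝ) < 1 + r ^ 2)]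
          have h6 : r ^ α * (1 - r ^ 2) * (1 + r ^ 2) = r ^ α - r ^ α * (r ^ 2) ^ 2 := by
            ring
          rw [h6]
          linarith [mul_nonneg hrα (sq_nonneg (r ^ 2))]
        calc r ^ α * (1 - r ^ 2) ≤ r ^ α / (1 + r ^ 2) := h5
          _ ≤ r ^ α / Real.sqrt (1 + r ^ 2) ^ α := h4
          _ = l ^ α := by rw [hl, Real.div_rpow hr0 (Real.sqrt_nonneg _)]
      have hl2 : l ^ 2 ≤ r ^ 2 := pow_le_pow_left₀ hl0 hlr 2
      have hrq : r ^ (2 - α) ≤ q := by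
        rw [hq]
        exact Real.rpow_le_rpow hr0 hrys h2α.le
      have hrσ2 : r ^ (2 - α) ≤ σ ^ (2 - α) :=
        Real.rpow_le_rpow hr0 hrσ.le h2α.le
      have hmlb : (β + K) / β * r ^ (2 - α) ≤ m := by
        rw [hm]
        apply le_min
        · calc (β + K) / β * r ^ (2 - α) ≤ (β + K) / β * q :=
              mul_le_mul_of_nonneg_left hrq hLpos.le
            _ ≤ (β + K) / β * (q + 1 / s) :=
              mul_le_mul_of_nonneg_left (le_add_of_nonneg_right (by positivity)) hLpos.le
        · calc (β + K) / β * r ^ (2 - α) ≤ (β + K) / β * σ ^ (2 - α) :=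
              mul_le_mul_of_nonneg_left hrσ2 hLpos.le
            _ ≤ 1 / 2 := hσ2
      have hr2eq : r ^ (2 - α) * r ^ α = r ^ 2 := by
        rw [← Real.rpow_add hrpos, show (2:ℝ) - α + α = ((2:ℕ):ℝ) by push_cast; ring,
          Real.rpow_natCast]
      have hrα1 : r ^ α ≤ 1 := Real.rpow_le_one hr0 hr1 hα0.le
      have hkey : (β + K) * r ^ 2 ≤ β * r ^ α * m := by
        have h1 : β * r ^ α * ((β + K) / β * r ^ (2 - α)) = (β + K) * r ^ 2 := by
          rw [show β * r ^ α * ((β + K) / β * r ^ (2 - α)) =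
            (β + K) / β * β * (r ^ (2 - α) * r ^ α) by ring, hr2eq]
          field_simp
        calc (β + K) * r ^ 2 = β * r ^ α * ((β + K) / β * r ^ (2 - α)) := h1.symm
          _ ≤ β * r ^ α * m := mul_le_mul_of_nonneg_left hmlb (by positivity)
      have hfinal : β * (r ^ α * (1 - m)) ≤ β * l ^ α - K * l ^ 2 :=
        aux_final hβ hK hkey hlα hl2 hrα1 (sq_nonneg r)
      linarith [hbθ, hgl, hfinal]

/-- Upper bound on the branching rate along trajectories staying below the line
`s ↦ √2 s` with small angle: there exist `σ, L > 0` and `η ∈ (0, 1/2]` such that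
`∫₀ᵗ b(θ_s) ds ≤ t - β ∫_{s₀}^t |Y_s/(√2 s)|^α (1 - min(L(|Y_s/s|^{2-α} + 1/s), η)) ds`. -/
theorem branching_rate_upper_bound (α β : ℝ)
    (hα : α ∈ Set.Ioo (2/3 : ℝ) 2) (hβ : 0 < β)
    (b : ℝ → ℝ) (hb_meas : Measurable b)
    (hb_range : ∀ θ : ℝ, b θ ∈ Set.Icc (0:ℝ) 1)
    (hb_per : ∀ θ : ℝ, b (θ + 2 * Real.pi) = b θ)
    (hA1 : ∀ ε ∈ Set.Ioc (0:ℝ) Real.pi, ∃ c : ℝ, c < 1 ∧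
      ∀ θ ∈ Set.Icc (-Real.pi) Real.pi, ε ≤ |θ| → b θ ≤ c)
    (hA2 : ∃ K : ℝ, 0 < K ∧ ∃ σ₀ : ℝ, 0 < σ₀ ∧
      ∀ θ : ℝ, |θ| ≤ σ₀ → |b θ - (1 - β * |θ| ^ α)| ≤ K * θ ^ 2) :
    ∃ σ : ℝ, 0 < σ ∧ ∃ L : ℝ, 0 < L ∧ ∃ η ∈ Set.Ioc (0:ℝ) (1/2),
      ∀ s₀ t : ℝ, 0 ≤ s₀ → s₀ ≤ t →
      ∀ X Y : ℝ → ℝ,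
        ContinuousOn X (Set.Icc 0 t) → ContinuousOn Y (Set.Icc 0 t) →
        (∀ s ∈ Set.Icc s₀ t, X s ≤ Real.sqrt 2 * s ∧ |Y s| < σ * s) →
        (∫ s in (0:ℝ)..t, b (angle (X s) (Y s)))
          ≤ t - β * ∫ s in s₀..t, |Y s / (Real.sqrt 2 * s)| ^ α *
              (1 - min (L * (|Y s / s| ^ (2 - α) + 1 / s)) η) := by
  obtain ⟨hα1, hα2⟩ := hα
  obtain ⟨K, hK, σ₀, hσ₀, hA2⟩ := hA2
  have hα0 : 0 < α := by linarith
  have h2α : 0 < 2 - α := by linarith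
  -- choice of σ'
  have hApos : 0 < α * β / (2 * K) := by positivity
  obtain ⟨σ', hσ'def⟩ : ∃ σ', σ' = min σ₀ (min (Real.pi / 3) ((α * β / (2 * K)) ^ (2 - α)⁻¹)) :=
    ⟨_, rfl⟩
  have hσ'pos : 0 < σ' := by
    rw [hσ'def]
    exact lt_min hσ₀ (lt_min (by positivity) (Real.rpow_pos_of_pos hApos _))
  have hσ'1 : σ' ≤ σ₀ := hσ'def.le.trans (min_le_left _ _)
  have hσ'2 : σ' ≤ Real.pi / 3 := hσ'def.le.trans (le_trans (min_le_right _ _) (min_le_left _ _))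
  have hσ'A : σ' ^ (2 - α) ≤ α * β / (2 * K) := by
    have h1 : σ' ≤ (α * β / (2 * K)) ^ (2 - α)⁻¹ :=
      hσ'def.le.trans (le_trans (min_le_right _ _) (min_le_right _ _))
    have h2 := Real.rpow_le_rpow hσ'pos.le h1 h2α.le
    rwa [Real.rpow_inv_rpow hApos.le h2α.ne'] at h2
  have hσ'3 : K * σ' ^ (2 - α) ≤ α * β / 2 := by
    have h1 := mul_le_mul_of_nonneg_left hσ'A hK.le
    calc K * σ' ^ (2 - α) ≤ K * (α * β / (2 * K)) := h1
      _ = α * β / 2 := by field_simp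
  obtain ⟨c, hc1, hc⟩ := hA1 σ' ⟨hσ'pos, by linarith [Real.pi_pos]⟩
  -- choice of σ
  have hLpos : 0 < (β + K) / β := by positivity
  have hBpos : 0 < 1 / (2 * ((β + K) / β)) := by positivity
  have hDpos : 0 < (1 - c) / β := div_pos (by linarith) hβ
  obtain ⟨σ, hσdef⟩ : ∃ σ, σ = min 1
      (min ((1 / (2 * ((β + K) / β))) ^ (2 - α)⁻¹) (((1 - c) / β) ^ α⁻¹)) := ⟨_, rfl⟩
  have hσpos : 0 < σ := by
    rw [hσdef]
    exact lt_min one_pos (lt_min (Real.rpow_pos_of_pos hBpos _) (Real.rpow_pos_of_pos hDpos _))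
  have hσ1 : σ ≤ 1 := hσdef.le.trans (min_le_left _ _)
  have hσ2 : (β + K) / β * σ ^ (2 - α) ≤ 1 / 2 := by
    have h1 : σ ≤ (1 / (2 * ((β + K) / β))) ^ (2 - α)⁻¹ :=
      hσdef.le.trans (le_trans (min_le_right _ _) (min_le_left _ _))
    have h2 := Real.rpow_le_rpow hσpos.le h1 h2α.le
    rw [Real.rpow_inv_rpow hBpos.le h2α.ne'] at h2
    have h3 := mul_le_mul_of_nonneg_left h2 hLpos.le
    calc (β + K) / β * σ ^ (2 - α) ≤ (β + K) / β * (1 / (2 * ((β + K) / β))) := h3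
      _ = 1 / 2 := by
        rw [mul_one_div, div_eq_div_iff (by positivity) (by norm_num : (2:ℝ) ≠ 0)]
        ring
  have hσ3 : β * σ ^ α ≤ 1 - c := by
    have h1 : σ ≤ ((1 - c) / β) ^ α⁻¹ :=
      hσdef.le.trans (le_trans (min_le_right _ _) (min_le_right _ _))
    have h2 := Real.rpow_le_rpow hσpos.le h1 hα0.le
    rw [Real.rpow_inv_rpow hDpos.le hα0.ne'] at h2
    have h3 := mul_le_mul_of_nonneg_left h2 hβ.le
    calc β * σ ^ α ≤ β * ((1 - c) / β) := h3
      _ = 1 - c := by field_simp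
  refine ⟨σ, hσpos, (β + K) / β, hLpos, 1/2, ⟨by norm_num, le_refl _⟩, ?_⟩
  intro s₀ t hs₀0 hst X Y hX hY hXY
  have hs₀ : 0 < s₀ := by
    have h := (hXY s₀ ⟨le_refl _, hst⟩).2
    have h0 : 0 < σ * s₀ := (abs_nonneg _).trans_lt h
    rcases mul_pos_iff.1 h0 with ⟨_, h'⟩ | ⟨h', _⟩
    · exact h'
    · linarith
  have hts : (0:ℝ) ≤ t := le_trans hs₀0 hst
  -- measurability and integrability of the LHS integrand
  have hXae : AEMeasurable X (volume.restrict (Set.Icc 0 t)) :=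
    hX.aemeasurable measurableSet_Icc
  have hYae : AEMeasurable Y (volume.restrict (Set.Icc 0 t)) :=
    hY.aemeasurable measurableSet_Icc
  have hangle_meas : Measurable fun p : ℝ × ℝ => angle p.1 p.2 := by
    apply Complex.measurable_arg.comp
    exact ((Complex.continuous_ofReal.comp continuous_fst).add
      ((Complex.continuous_ofReal.comp continuous_snd).mul continuous_const)).measurable
  have hFae : AEMeasurable (fun s => b (angle (X s) (Y s))) (volume.restrict (Set.Icc 0 t)) :=
    hb_meas.comp_aemeasurable (hangle_meas.comp_aemeasurable (hXae.prodMk hYae))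
  have hFint : ∀ u v : ℝ, u ∈ Set.Icc (0:ℝ) t → v ∈ Set.Icc (0:ℝ) t →
      IntervalIntegrable (fun s => b (angle (X s) (Y s))) volume u v := by
    intro u v hu hv
    rw [intervalIntegrable_iff]
    have hsub : Set.uIoc u v ⊆ Set.Icc 0 t := by
      intro w hw
      exact ⟨le_trans (le_min hu.1 hv.1) hw.1.le, le_trans hw.2 (max_le hu.2 hv.2)⟩
    refine ⟨(hFae.mono_measure (Measure.restrict_mono hsub le_rfl)).aestronglyMeasurable,
      HasFiniteIntegral.restrict_of_bounded (C := 1) ?_ ?_⟩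
    · exact (measure_mono hsub).trans_lt (by rw [Real.volume_Icc]; exact ENNReal.ofReal_lt_top)
    · apply Filter.Eventually.of_forall
      intro w
      rw [Real.norm_eq_abs, abs_of_nonneg (hb_range _).1]
      exact (hb_range _).2
  -- continuity/integrability of the RHS integrand
  have hGc : ContinuousOn (fun w : ℝ => |Y w / (Real.sqrt 2 * w)| ^ α *
      (1 - min ((β + K) / β * (|Y w / w| ^ (2 - α) + 1 / w)) (1/2))) (Set.Icc s₀ t) := by
    have hsub : Set.Icc s₀ t ⊆ Set.Icc 0 t := Set.Icc_subset_Icc hs₀.le le_rfl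
    have hsne : ∀ w ∈ Set.Icc s₀ t, w ≠ 0 := fun w hw => (lt_of_lt_of_le hs₀ hw.1).ne'
    have hY' : ContinuousOn Y (Set.Icc s₀ t) := hY.mono hsub
    have h1 : ContinuousOn (fun w => |Y w / (Real.sqrt 2 * w)| ^ α) (Set.Icc s₀ t) :=
      (Real.continuous_rpow_const hα0.le).comp_continuousOn
        ((hY'.div (continuousOn_const.mul continuousOn_id)
          (fun w hw => mul_ne_zero (Real.sqrt_pos.2 (by norm_num)).ne' (hsne w hw))).abs)
    have h2 : ContinuousOn (fun w => |Y w / w| ^ (2 - α)) (Set.Icc s₀ t) :=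
      (Real.continuous_rpow_const h2α.le).comp_continuousOn
        ((hY'.div continuousOn_id hsne).abs)
    have h3 : ContinuousOn (fun w : ℝ => 1 / w) (Set.Icc s₀ t) :=
      continuousOn_const.div continuousOn_id hsne
    have h4 : ContinuousOn (fun w : ℝ =>
        min ((β + K) / β * (|Y w / w| ^ (2 - α) + 1 / w)) (1/2)) (Set.Icc s₀ t) :=
      ContinuousOn.inf (continuousOn_const.mul (h2.add h3)) continuousOn_const
    exact h1.mul (continuousOn_const.sub h4)
  have hGint : IntervalIntegrable (fun w : ℝ => |Y w / (Real.sqrt 2 * w)| ^ α *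
      (1 - min ((β + K) / β * (|Y w / w| ^ (2 - α) + 1 / w)) (1/2))) volume s₀ t :=
    hGc.intervalIntegrable_of_Icc hst
  -- pointwise bound on [s₀, t]
  have hpt : ∀ w ∈ Set.Icc s₀ t, b (angle (X w) (Y w)) ≤
      1 - β * (|Y w / (Real.sqrt 2 * w)| ^ α *
        (1 - min ((β + K) / β * (|Y w / w| ^ (2 - α) + 1 / w)) (1/2))) := by
    intro w hw
    have hw0 : 0 < w := lt_of_lt_of_le hs₀ hw.1
    obtain ⟨hXw, hYw⟩ := hXY w hw
    exact key_bound α β K σ₀ σ' σ c b hα1 hα2 hβ hK (fun θ => (hb_range θ).2) hA2 hc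
      hσ'pos hσ'1 hσ'2 hσ'3 hσpos hσ1 hσ2 hσ3 w (X w) (Y w) hw0 hXw hYw
  -- integral estimates
  have hF1 := hFint 0 s₀ ⟨le_refl _, hts⟩ ⟨hs₀0, hst⟩
  have hF2 := hFint s₀ t ⟨hs₀0, hst⟩ ⟨hts, le_refl _⟩
  have hsplit := intervalIntegral.integral_add_adjacent_intervals hF1 hF2
  have hI1 : (∫ s in (0:ℝ)..s₀, b (angle (X s) (Y s))) ≤ s₀ := by
    have h := intervalIntegral.integral_mono_on hs₀0 hF1 intervalIntegrable_const
      (fun w _ => (hb_range (angle (X w) (Y w))).2)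
    simpa using h
  have hI2 : (∫ s in s₀..t, b (angle (X s) (Y s))) ≤
      (t - s₀) - β * ∫ s in s₀..t, |Y s / (Real.sqrt 2 * s)| ^ α *
        (1 - min ((β + K) / β * (|Y s / s| ^ (2 - α) + 1 / s)) (1/2)) := by
    have hmono := intervalIntegral.integral_mono_on hst hF2
      (intervalIntegrable_const.sub (hGint.const_mul β)) hpt
    have heq : (∫ s in s₀..t, (1 - β * (|Y s / (Real.sqrt 2 * s)| ^ α *
        (1 - min ((β + K) / β * (|Y s / s| ^ (2 - α) + 1 / s)) (1/2))))) =
        (t - s₀) - β * ∫ s in s₀..t, |Y s / (Real.sqrt 2 * s)| ^ α *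
          (1 - min ((β + K) / β * (|Y s / s| ^ (2 - α) + 1 / s)) (1/2)) := by
      rw [intervalIntegral.integral_sub intervalIntegrable_const (hGint.const_mul β),
        intervalIntegral.integral_const, intervalIntegral.integral_const_mul]
      simp
    linarith [hmono, heq.ge, heq.le]
  linarith [hsplit, hI1, hI2]
end

section
/- For all α, L, a, b̂ > 0 there exists η ∈ (0, 1/2] such that for every r ≥ (2L)^{1/b̂}, the map y ↦ (y/r)^α · (1 − min(L·((y/r)^a + r^{−b̂}), η)) is nondecreasing on [0, ∞). -/
open Real Set

private lemma core_mono (α L a K η : ℝ) (hα : 0 < α) (hL : 0 < L) (ha : 0 < a)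
    (hK0 : 0 ≤ K) (hK : K ≤ 1/2) (hη : η ≤ α / (2*(α+a)))
    {s t : ℝ} (hs : 0 ≤ s) (hst : s ≤ t) (hta : L * t ^ a ≤ η) :
    s ^ α * (1 - (L * s ^ a + K)) ≤ t ^ α * (1 - (L * t ^ a + K)) := by
  have ht : 0 ≤ t := hs.trans hst
  set g : ℝ → ℝ := fun u => (1 - K) * u ^ α - L * u ^ (α + a) with hg
  have hgeq : ∀ u, 0 ≤ u → g u = u ^ α * (1 - (L * u ^ a + K)) := by
    intro u hu
    have : u ^ (α + a) = u ^ α * u ^ a := Real.rpow_add' hu (by positivity)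
    simp only [hg, this]; ring
  have hmono : MonotoneOn g (Icc 0 t) := by
    apply monotoneOn_of_deriv_nonneg (convex_Icc 0 t)
    · apply ContinuousOn.sub
      · exact continuousOn_const.mul (continuousOn_id.rpow_const
          (fun x _ => Or.inr hα.le))
      · exact continuousOn_const.mul (continuousOn_id.rpow_const
          (fun x _ => Or.inr (by positivity)))
    · rw [interior_Icc]
      intro u hu
      have hu0 : u ≠ 0 := ne_of_gt hu.1
      exact (((Real.hasDerivAt_rpow_const (Or.inl hu0)).const_mul (1 - K)).sub
        ((Real.hasDerivAt_rpow_const (p := α + a) (Or.inl hu0)).const_mul L)).differentiableAt.differentiableWithinAt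
    · rw [interior_Icc]
      intro u hu
      have hu0 : u ≠ 0 := ne_of_gt hu.1
      have hD : HasDerivAt g ((1 - K) * (α * u ^ (α - 1)) - L * ((α + a) * u ^ (α + a - 1))) u :=
        ((Real.hasDerivAt_rpow_const (Or.inl hu0)).const_mul (1 - K)).sub
          ((Real.hasDerivAt_rpow_const (p := α + a) (Or.inl hu0)).const_mul L)
      rw [hD.deriv]
      have hsplit : u ^ (α + a - 1) = u ^ (α - 1) * u ^ a := by
        rw [← Real.rpow_add hu.1]; ring_nf
      rw [hsplit]
      have key : L * ((α + a) * u ^ a) ≤ (1 - K) * α := by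
        have hua : L * u ^ a ≤ η := by
          calc L * u ^ a ≤ L * t ^ a := by
                exact mul_le_mul_of_nonneg_left
                  (Real.rpow_le_rpow hu.1.le hu.2.le ha.le) hL.le
            _ ≤ η := hta
        have h1 : L * ((α + a) * u ^ a) = (α + a) * (L * u ^ a) := by ring
        have h2 : (α + a) * (L * u ^ a) ≤ (α + a) * (α / (2*(α+a))) :=
          mul_le_mul_of_nonneg_left (hua.trans hη) (by positivity)
        have h3 : (α + a) * (α / (2*(α+a))) = α / 2 := by
          field_simp
        have h4 : α / 2 ≤ (1 - K) * α := by nlinarith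
        linarith [h1 ▸ (h2.trans_eq h3)]
      have hupow : (0:ℝ) ≤ u ^ (α - 1) := Real.rpow_nonneg hu.1.le _
      nlinarith [mul_le_mul_of_nonneg_right key hupow]
  have := hmono (Set.mem_Icc.mpr ⟨hs, hst⟩) (Set.mem_Icc.mpr ⟨ht, le_refl t⟩) hst
  rwa [hgeq s hs, hgeq t ht] at this

/-- For all `α, L, a, b̂ > 0` there exists `η ∈ (0, 1/2]` such that for every
`r ≥ (2L)^{1/b̂}` the map `y ↦ (y/r)^α (1 - min(L((y/r)^a + r^{-b̂}), η))` is
nondecreasing on `[0, ∞)`. -/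
theorem exists_eta_monotone (α L a bh : ℝ)
    (hα : 0 < α) (hL : 0 < L) (ha : 0 < a) (hbh : 0 < bh) :
    ∃ η ∈ Set.Ioc (0:ℝ) (1/2),
      ∀ r : ℝ, (2 * L) ^ (1 / bh) ≤ r →
        MonotoneOn
          (fun y : ℝ => (y / r) ^ α * (1 - min (L * ((y / r) ^ a + r ^ (-bh))) η))
          (Set.Ici (0:ℝ)) := by
  set η : ℝ := α / (2 * (α + a)) with hηdef
  have hη0 : 0 < η := by positivity
  have hη2 : η ≤ 1/2 := by
    rw [hηdef, div_le_div_iff₀ (by positivity) (by norm_num)]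
    nlinarith
  refine ⟨η, ⟨hη0, hη2⟩, ?_⟩
  intro r hr
  have hr0 : 0 < r := lt_of_lt_of_le (Real.rpow_pos_of_pos (by positivity) _) hr
  set K : ℝ := L * r ^ (-bh) with hKdef
  have hK0 : 0 ≤ K := by positivity
  have hK : K ≤ 1/2 := by
    have h1 : (2 * L) ≤ r ^ bh := by
      have := Real.rpow_le_rpow (Real.rpow_pos_of_pos (by positivity) (1/bh)).le hr hbh.le
      rwa [one_div, Real.rpow_inv_rpow (by positivity) hbh.ne'] at this
    have h2 : r ^ (-bh) ≤ (2 * L)⁻¹ := by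
      rw [Real.rpow_neg hr0.le]
      exact inv_anti₀ (by positivity) h1
    calc K ≤ L * (2 * L)⁻¹ := mul_le_mul_of_nonneg_left h2 hL.le
      _ = 1/2 := by field_simp
  intro x hx y hy hxy
  simp only
  set s : ℝ := x / r with hsdef
  set t : ℝ := y / r with htdef
  have hs0 : 0 ≤ s := div_nonneg hx hr0.le
  have ht0 : 0 ≤ t := div_nonneg hy hr0.le
  have hst : s ≤ t := div_le_div_of_nonneg_right hxy hr0.le
  have hsta : s ^ a ≤ t ^ a := Real.rpow_le_rpow hs0 hst ha.le
  -- rewrite as max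
  have hmax : ∀ u : ℝ, 0 ≤ u →
      u ^ α * (1 - min (L * (u ^ a + r ^ (-bh))) η)
        = max (u ^ α * (1 - (L * u ^ a + K))) (u ^ α * (1 - η)) := by
    intro u hu
    have h1 : 1 - min (L * (u ^ a + r ^ (-bh))) η
        = max (1 - (L * u ^ a + K)) (1 - η) := by
      rw [hKdef, ← mul_add]
      rcases le_total (L * (u ^ a + r ^ (-bh))) η with h | h
      · rw [min_eq_left h, max_eq_left (by linarith)]
      · rw [min_eq_right h, max_eq_right (by linarith)]
    rw [h1, mul_max_of_nonneg _ _ (Real.rpow_nonneg hu _)]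
  rw [hmax s hs0, hmax t ht0]
  have hh : s ^ α * (1 - η) ≤ t ^ α * (1 - η) :=
    mul_le_mul_of_nonneg_right (Real.rpow_le_rpow hs0 hst hα.le) (by linarith)
  apply max_le
  · -- g s ≤ max
    rcases le_or_gt η (L * s ^ a + K) with hc | hc
    · -- g s ≤ h s ≤ h t
      refine le_max_of_le_right ?_
      refine le_trans ?_ hh
      exact mul_le_mul_of_nonneg_left (by linarith) (Real.rpow_nonneg hs0 _)
    · rcases le_total (L * t ^ a + K) η with hc2 | hc2
      · exact le_max_of_le_left
          (core_mono α L a K η hα hL ha hK0 hK (le_refl _) hs0 hst (by linarith))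
      · -- intermediate point
        refine le_max_of_le_right ?_
        have hηK : 0 < η - K := by nlinarith [Real.rpow_nonneg hs0 a, mul_nonneg hL.le (Real.rpow_nonneg hs0 a)]
        set t₀ : ℝ := ((η - K) / L) ^ (1/a) with ht₀def
        have ht₀0 : 0 ≤ t₀ := Real.rpow_nonneg (by positivity) _
        have ht₀a : t₀ ^ a = (η - K) / L := by
          rw [ht₀def, one_div, Real.rpow_inv_rpow (by positivity) ha.ne']
        have hLt₀ : L * t₀ ^ a = η - K := by
          rw [ht₀a]; field_simp
        have hst₀ : s ≤ t₀ := by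
          rw [← Real.rpow_le_rpow_iff hs0 ht₀0 ha, ht₀a, le_div_iff₀ hL]
          nlinarith
        have ht₀t : t₀ ≤ t := by
          rw [← Real.rpow_le_rpow_iff ht₀0 ht0 ha, ht₀a, div_le_iff₀ hL]
          nlinarith
        have step1 : s ^ α * (1 - (L * s ^ a + K)) ≤ t₀ ^ α * (1 - (L * t₀ ^ a + K)) :=
          core_mono α L a K η hα hL ha hK0 hK (le_refl _) hs0 hst₀ (by linarith)
        have step2 : t₀ ^ α * (1 - (L * t₀ ^ a + K)) = t₀ ^ α * (1 - η) := by
          rw [hLt₀]; ring_nf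
        have step3 : t₀ ^ α * (1 - η) ≤ t ^ α * (1 - η) :=
          mul_le_mul_of_nonneg_right (Real.rpow_le_rpow ht₀0 ht₀t hα.le) (by linarith)
        linarith
  · exact le_max_of_le_right hh
end
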